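/- arXiv:2005.11949 — 2 statements merged into one kernel-verified Lean document; each statement's English description precedes it below -/
import Mathlib

section
/- For any N, L ∈ ℕ and any integer k ≥ 2, there exists a ReLU network Φ_k: ℝ^k → ℝ with width 9N + k + 7 and depth 7k(k−1)L such that |Φ_k(x) − x_1 x_2 ⋯ x_k| ≤ 9(k−1)(N+1)^{−7kL} for all x = (x_1, …, x_k) ∈ [0,1]^k, and moreover Φ_k(x) = 0 whenever x_i = 0 for some 1 ≤ i ≤ k. -/
open scoped BigOperators ENNReal

noncomputable section

/-- `f` is an affine map `x ↦ A x + b`. -/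
def IsAffineMap (din dout : ℕ) (f : (Fin din → ℝ) → (Fin dout → ℝ)) : Prop :=
  ∃ (A : Matrix (Fin dout) (Fin din) ℝ) (b : Fin dout → ℝ),
    ∀ x i, f x i = (∑ j, A i j * x j) + b i

/-- `ReluNetExact din dout f N L` asserts that `f = T_L ∘ σ ∘ ⋯ ∘ σ ∘ T_1` where each `T_l`
is affine, `σ` is the coordinatewise ReLU `t ↦ max t 0`, all intermediate dimensions are at
most `N` (the width), and there are `L` affine layers (the depth). -/
inductive ReluNetExact : (din dout : ℕ) → ((Fin din → ℝ) → (Fin dout → ℝ)) → ℕ → ℕ → Prop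
  | affine {din dout N : ℕ} {f : (Fin din → ℝ) → (Fin dout → ℝ)}
      (hf : IsAffineMap din dout f) : ReluNetExact din dout f N 1
  | comp {din k dout N L : ℕ} (hk : k ≤ N) {T : (Fin din → ℝ) → (Fin k → ℝ)}
      (hT : IsAffineMap din k T) {g : (Fin k → ℝ) → (Fin dout → ℝ)}
      (hg : ReluNetExact k dout g N L) :
      ReluNetExact din dout (fun x => g (fun i => max (T x i) 0)) N (L + 1)

/-- `f` is representable by a ReLU network with width at most `N` and depth at most `L`. -/
def IsReluNet (din dout : ℕ) (f : (Fin din → ℝ) → (Fin dout → ℝ)) (N L : ℕ) : Prop :=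
  ∃ L' ≤ L, ReluNetExact din dout f N L'

/-- Scalar-valued version of `IsReluNet`. -/
def IsReluNet1 (din : ℕ) (f : (Fin din → ℝ) → ℝ) (N L : ℕ) : Prop :=
  IsReluNet din 1 (fun x _ => f x) N L

set_option autoImplicit false
set_option maxHeartbeats 1000000

namespace S13

def relu (x : ℝ) : ℝ := max x 0

lemma relu_of_nonneg {x : ℝ} (h : 0 ≤ x) : relu x = x := max_eq_left h
lemma relu_of_nonpos {x : ℝ} (h : x ≤ 0) : relu x = 0 := max_eq_right h
lemma relu_nonneg (x : ℝ) : 0 ≤ relu x := le_max_right _ _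

/-- scalar affine functions -/
def Aff1 (d : ℕ) (g : (Fin d → ℝ) → ℝ) : Prop :=
  ∃ c : Fin d → ℝ, ∃ b : ℝ, ∀ x, g x = (∑ j, c j * x j) + b

namespace Aff1

lemma const (d : ℕ) (b : ℝ) : Aff1 d (fun _ => b) := ⟨0, b, by simp⟩

lemma zero (d : ℕ) : Aff1 d (fun _ => 0) := const d 0

lemma proj (d : ℕ) (j : Fin d) : Aff1 d (fun x => x j) := by
  refine ⟨fun i => if i = j then 1 else 0, 0, fun x => ?_⟩
  simp [ite_mul, Finset.sum_ite_eq']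

lemma add {d : ℕ} {g h : (Fin d → ℝ) → ℝ} (hg : Aff1 d g) (hh : Aff1 d h) :
    Aff1 d (fun x => g x + h x) := by
  obtain ⟨c1, b1, h1⟩ := hg; obtain ⟨c2, b2, h2⟩ := hh
  refine ⟨c1 + c2, b1 + b2, fun x => ?_⟩
  simp [h1, h2, add_mul, Finset.sum_add_distrib]; ring

lemma smul {d : ℕ} (r : ℝ) {g : (Fin d → ℝ) → ℝ} (hg : Aff1 d g) :
    Aff1 d (fun x => r * g x) := by
  obtain ⟨c, b, h⟩ := hg
  refine ⟨fun j => r * c j, r * b, fun x => ?_⟩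
  simp [h, Finset.mul_sum, mul_add, mul_assoc]

lemma neg {d : ℕ} {g : (Fin d → ℝ) → ℝ} (hg : Aff1 d g) :
    Aff1 d (fun x => -g x) := by
  have := smul (-1) hg; simpa using this

lemma sub {d : ℕ} {g h : (Fin d → ℝ) → ℝ} (hg : Aff1 d g) (hh : Aff1 d h) :
    Aff1 d (fun x => g x - h x) := by
  have := add hg (neg hh); simpa [sub_eq_add_neg] using this

lemma finsetSum {d : ℕ} {ι : Type*} (s : Finset ι) (F : ι → (Fin d → ℝ) → ℝ)
    (h : ∀ i ∈ s, Aff1 d (F i)) : Aff1 d (fun x => ∑ i ∈ s, F i x) := by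
  classical
  induction s using Finset.induction_on with
  | empty => simpa using zero d
  | insert a s hni ih =>
    have h1 : Aff1 d (F a) := h a (Finset.mem_insert_self a s)
    have h2 : Aff1 d (fun x => ∑ i ∈ s, F i x) := ih (fun i hi => h i (Finset.mem_insert_of_mem hi))
    have := add h1 h2
    refine ⟨?_, ?_, ?_⟩ <;> [skip; skip; skip]
    · exact this.choose
    · exact this.choose_spec.choose
    · intro x
      have hx := this.choose_spec.choose_spec x
      simpa [Finset.sum_insert hni] using hx

lemma div_const {d : ℕ} {g : (Fin d → ℝ) → ℝ} (hg : Aff1 d g) (r : ℝ) :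
    Aff1 d (fun x => g x / r) := by
  have := smul r⁻¹ hg; simpa [div_eq_inv_mul] using this

end Aff1

lemma isAffineMap_of_aff1 {a b : ℕ} {f : (Fin a → ℝ) → (Fin b → ℝ)}
    (h : ∀ i, Aff1 a (fun x => f x i)) : IsAffineMap a b f := by
  choose c bb hc using h
  exact ⟨fun i j => c i j, bb, fun x i => hc i x⟩

lemma isAffineMap_id (a : ℕ) : IsAffineMap a a (fun x => x) :=
  isAffineMap_of_aff1 (fun i => Aff1.proj a i)

/-- composition of affine maps is affine -/
lemma affine_comp {a b c : ℕ} {f : (Fin a → ℝ) → (Fin b → ℝ)}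
    {g : (Fin b → ℝ) → (Fin c → ℝ)} (hf : IsAffineMap a b f) (hg : IsAffineMap b c g) :
    IsAffineMap a c (fun x => g (f x)) := by
  obtain ⟨A, bA, hA⟩ := hf
  refine isAffineMap_of_aff1 (fun i => ?_)
  obtain ⟨B, bB, hB⟩ := hg
  have : (fun x => g (f x) i) = fun x => (∑ j, B i j * f x j) + bB i := by
    funext x; exact hB (f x) i
  rw [this]
  refine Aff1.add (Aff1.finsetSum _ _ (fun j _ => ?_)) (Aff1.const _ _)
  have : (fun x => B i j * f x j) = fun x => B i j * ((∑ l, A j l * x l) + bA j) := by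
    funext x; rw [hA]
  rw [this]
  exact Aff1.smul _ (Aff1.add (Aff1.finsetSum _ _ (fun l _ => Aff1.smul _ (Aff1.proj a l)))
    (Aff1.const _ _))

lemma net_congr {a b N L : ℕ} {f g : (Fin a → ℝ) → (Fin b → ℝ)}
    (h : ReluNetExact a b f N L) (hfg : f = g) : ReluNetExact a b g N L := hfg ▸ h

lemma net_pos {a b N L : ℕ} {f : (Fin a → ℝ) → (Fin b → ℝ)}
    (h : ReluNetExact a b f N L) : 1 ≤ L := by
  induction h with
  | affine _ => exact le_refl 1
  | comp _ _ _ ih => omega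

lemma net_mono_width {a b N N' L : ℕ} {f : (Fin a → ℝ) → (Fin b → ℝ)}
    (h : ReluNetExact a b f N L) (hN : N ≤ N') : ReluNetExact a b f N' L := by
  induction h with
  | affine hf => exact .affine hf
  | comp hk hT _ ih => exact .comp (le_trans hk hN) hT (ih hN)

/-- precomposing a net with an affine map -/
lemma net_precomp_affine {b c N L : ℕ} {g : (Fin b → ℝ) → (Fin c → ℝ)}
    (hg : ReluNetExact b c g N L) :
    ∀ {a : ℕ} {f : (Fin a → ℝ) → (Fin b → ℝ)}, IsAffineMap a b f →
      ReluNetExact a c (fun x => g (f x)) N L := by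
  induction hg with
  | affine haff => exact fun hf => .affine (affine_comp hf haff)
  | comp hk hT _ ih =>
    intro a f hf
    exact .comp hk (affine_comp hf hT) (by exact_mod_cast (by assumption))

/-- composition of two nets -/
lemma net_comp {a b N L1 : ℕ} {f : (Fin a → ℝ) → (Fin b → ℝ)}
    (hf : ReluNetExact a b f N L1) :
    ∀ {c L2 : ℕ} {g : (Fin b → ℝ) → (Fin c → ℝ)}, ReluNetExact b c g N L2 →
      ReluNetExact a c (fun x => g (f x)) N (L1 + L2 - 1) := by
  induction hf with
  | affine haff =>
    intro c L2 g hg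
    have := net_precomp_affine hg haff
    simpa using this
  | comp hk hT hf' ih =>
    intro c L2 g hg
    rename_i din kk dout NN LL T f'
    have hL2 : 1 ≤ L2 := net_pos hg
    have h3 := ReluNetExact.comp hk hT (ih hg)
    have heq : (LL + L2 - 1) + 1 = LL + 1 + L2 - 1 := by omega
    exact heq ▸ h3

lemma fin_split {m n : ℕ} (i : Fin (m+n)) :
    (∃ j : Fin m, i = Fin.castAdd n j) ∨ (∃ j : Fin n, i = Fin.natAdd m j) := by
  by_cases h : (i : ℕ) < m
  · exact Or.inl ⟨⟨i, h⟩, Fin.ext (by simp)⟩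
  · refine Or.inr ⟨⟨(i : ℕ) - m, by omega⟩, Fin.ext (by simp; omega)⟩

def aug {a b : ℕ} (c : ℕ) (T : (Fin a → ℝ) → Fin b → ℝ) :
    (Fin (a+c) → ℝ) → Fin (b+c) → ℝ := fun x =>
  Fin.addCases (fun i => T (fun j => x (Fin.castAdd c j)) i) (fun j => x (Fin.natAdd a j))

lemma aug_left {a b c : ℕ} (T : (Fin a → ℝ) → Fin b → ℝ) (x) (i : Fin b) :
    aug c T x (Fin.castAdd c i) = T (fun j => x (Fin.castAdd c j)) i := by
  simp [aug]

lemma aug_right {a b c : ℕ} (T : (Fin a → ℝ) → Fin b → ℝ) (x) (j : Fin c) :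
    aug c T x (Fin.natAdd b j) = x (Fin.natAdd a j) := by
  simp [aug]

lemma affine_aug {a b : ℕ} (c : ℕ) {T : (Fin a → ℝ) → Fin b → ℝ}
    (hT : IsAffineMap a b T) : IsAffineMap (a+c) (b+c) (aug c T) := by
  refine isAffineMap_of_aff1 (fun i => ?_)
  rcases fin_split i with ⟨i0, rfl⟩ | ⟨j0, rfl⟩
  · obtain ⟨A, bb, hA⟩ := hT
    have : (fun x : Fin (a+c) → ℝ => aug c T x (Fin.castAdd c i0)) =
        fun x => (∑ j, A i0 j * x (Fin.castAdd c j)) + bb i0 := by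
      funext x; rw [aug_left, hA]
    rw [this]
    exact Aff1.add (Aff1.finsetSum _ _ (fun j _ => Aff1.smul _ (Aff1.proj _ _)))
      (Aff1.const _ _)
  · have : (fun x : Fin (a+c) → ℝ => aug c T x (Fin.natAdd b j0)) =
        fun x => x (Fin.natAdd a j0) := by
      funext x; rw [aug_right]
    rw [this]; exact Aff1.proj _ _

/-- extend a net with `c` pass-through (ReLU-clamped) carry channels -/
lemma net_withCarries {a b N L : ℕ} {f : (Fin a → ℝ) → (Fin b → ℝ)}
    (hf : ReluNetExact a b f N L) (c : ℕ) :
    ∃ g : (Fin (a+c) → ℝ) → (Fin (b+c) → ℝ),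
      ReluNetExact (a+c) (b+c) g (N+c) L ∧
      (∀ x, ∀ i : Fin b, g x (Fin.castAdd c i) = f (fun j => x (Fin.castAdd c j)) i) ∧
      (∀ x, ∀ j : Fin c, 0 ≤ x (Fin.natAdd a j) → g x (Fin.natAdd b j) = x (Fin.natAdd a j)) := by
  induction hf with
  | affine haff =>
    rename_i din dout NN ff
    exact ⟨aug c ff, .affine (affine_aug c haff),
      fun x i => aug_left ff x i, fun x j _ => aug_right ff x j⟩
  | comp hk hT hg' ih =>
    rename_i din kk dout NN LL T g'
    obtain ⟨g'', hnet, hfst, hsnd⟩ := ih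
    refine ⟨fun x => g'' (fun i => max (aug c T x i) 0),
      .comp (by omega) (affine_aug c hT) hnet, fun x i => ?_, fun x j hx => ?_⟩
    · show g'' (fun i => max (aug c T x i) 0) (Fin.castAdd c i) = _
      rw [hfst]
      show g' (fun j => max (aug c T x (Fin.castAdd c j)) 0) i = _
      have : (fun j => max (aug c T x (Fin.castAdd c j)) 0) =
          fun j => max (T (fun j' => x (Fin.castAdd c j')) j) 0 := by
        funext j; rw [aug_left]
      rw [this]
    · show g'' (fun i => max (aug c T x i) 0) (Fin.natAdd dout j) = _
      rw [hsnd _ _ (le_max_right _ _)]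
      rw [aug_right]
      exact max_eq_left hx


def tent (q m : ℕ) (z : ℝ) : ℝ :=
  2*(q:ℝ)*(relu (z - m/q) - 2*relu (z - (2*m+1)/(2*q)) + relu (z - (m+1)/q))

/-- the `q`-tooth triangle wave on `[0,1]` -/
def Tw (q : ℕ) (z : ℝ) : ℝ := ∑ m ∈ Finset.range q, tent q m z

/-- first-step correction function -/
def C0 (q : ℕ) (z : ℝ) : ℝ :=
  (((q:ℝ)-1)/q) * relu z - (2/q) * ∑ m ∈ Finset.Icc 1 (q-1), relu (z - m/q)

/-- later-step correction function -/
def CCf (q : ℕ) (z : ℝ) : ℝ := (C0 q z + relu z)/4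

section analytic
variable {q : ℕ}

lemma tent_left (hq : 1 ≤ q) {m : ℕ} {z : ℝ} (h : z ≤ m/(q:ℝ)) : tent q m z = 0 := by
  have hQ : (0:ℝ) < q := by exact_mod_cast hq
  have h1 : z - m/(q:ℝ) ≤ 0 := by linarith
  have h2 : z - (2*m+1)/(2*(q:ℝ)) ≤ 0 := by
    have : (m:ℝ)/q ≤ (2*m+1)/(2*q) := by
      rw [div_le_div_iff₀ hQ (by positivity)]; nlinarith
    linarith
  have h3 : z - ((m:ℝ)+1)/q ≤ 0 := by
    have : (m:ℝ)/q ≤ ((m:ℝ)+1)/q := by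
      rw [div_le_div_iff₀ hQ hQ]; nlinarith
    linarith
  rw [tent, relu_of_nonpos h1, relu_of_nonpos h2, relu_of_nonpos h3]; ring

lemma tent_right (hq : 1 ≤ q) {m : ℕ} {z : ℝ} (h : ((m:ℝ)+1)/q ≤ z) : tent q m z = 0 := by
  have hQ : (0:ℝ) < q := by exact_mod_cast hq
  have h3 : 0 ≤ z - ((m:ℝ)+1)/q := by linarith
  have h2 : 0 ≤ z - (2*m+1)/(2*(q:ℝ)) := by
    have : (2*(m:ℝ)+1)/(2*q) ≤ ((m:ℝ)+1)/q := by
      rw [div_le_div_iff₀ (by positivity) hQ]; nlinarith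
    linarith
  have h1 : 0 ≤ z - (m:ℝ)/q := by
    have : (m:ℝ)/q ≤ ((m:ℝ)+1)/q := by
      rw [div_le_div_iff₀ hQ hQ]; nlinarith
    linarith
  rw [tent, relu_of_nonneg h1, relu_of_nonneg h2, relu_of_nonneg h3]
  field_simp
  ring

lemma tent_mid (hq : 1 ≤ q) {m : ℕ} {z : ℝ} (h1 : (m:ℝ)/q ≤ z) (h2 : z ≤ ((m:ℝ)+1)/q) :
    tent q m z = 2*(q:ℝ)*z - 2*m - 4*(q:ℝ)*relu (z - (2*m+1)/(2*(q:ℝ))) := by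
  have hQ : (0:ℝ) < q := by exact_mod_cast hq
  rw [tent, relu_of_nonneg (show (0:ℝ) ≤ z - (m:ℝ)/q by linarith),
    relu_of_nonpos (show z - ((m:ℝ)+1)/q ≤ 0 by linarith)]
  field_simp
  ring

lemma exists_cell (hq : 1 ≤ q) {t : ℝ} (h0 : 0 ≤ t) (h1 : t ≤ 1) :
    ∃ j : ℕ, j < q ∧ (j:ℝ)/q ≤ t ∧ t ≤ ((j:ℝ)+1)/q := by
  have hQ : (0:ℝ) < q := by exact_mod_cast hq
  by_cases ht : t = 1
  · have hcast : ((q-1:ℕ):ℝ) = (q:ℝ) - 1 := by push_cast [Nat.cast_sub hq]; ring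
    subst ht
    refine ⟨q - 1, by omega, ?_, ?_⟩
    · rw [div_le_one hQ, hcast]; linarith
    · rw [le_div_iff₀ hQ, hcast]; linarith
  · have ht1 : t < 1 := lt_of_le_of_ne h1 ht
    refine ⟨⌊t * q⌋₊, ?_, ?_, ?_⟩
    · have h2 : t * q < q := by nlinarith
      have := (Nat.floor_lt (by positivity : (0:ℝ) ≤ t * q)).mpr (by exact_mod_cast h2)
      exact_mod_cast this
    · rw [div_le_iff₀ hQ]
      have := Nat.floor_le (by positivity : (0:ℝ) ≤ t * q)
      linarith
    · rw [le_div_iff₀ hQ]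
      have := Nat.lt_floor_add_one (t * q)
      linarith

lemma Tw_cell (hq : 1 ≤ q) {j : ℕ} {t : ℝ} (hj : j < q)
    (hl : (j:ℝ)/q ≤ t) (hr : t ≤ ((j:ℝ)+1)/q) :
    Tw q t = 2*(q:ℝ)*t - 2*j - 4*(q:ℝ)*relu (t - (2*j+1)/(2*(q:ℝ))) := by
  have hQ : (0:ℝ) < q := by exact_mod_cast hq
  rw [Tw, Finset.sum_eq_single_of_mem j (Finset.mem_range.mpr hj)]
  · exact tent_mid hq hl hr
  · intro m hm hmj
    rcases lt_or_gt_of_ne hmj with h | h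
    · apply tent_right hq
      refine le_trans ?_ hl
      rw [div_le_div_iff₀ hQ hQ]
      have : (m:ℝ) + 1 ≤ j := by exact_mod_cast h
      nlinarith
    · apply tent_left hq
      refine le_trans hr ?_
      rw [div_le_div_iff₀ hQ hQ]
      have : (j:ℝ) + 1 ≤ m := by exact_mod_cast h
      nlinarith

lemma Tw_cell_props (hq : 1 ≤ q) {j : ℕ} {t : ℝ} (hj : j < q)
    (hl : (j:ℝ)/q ≤ t) (hr : t ≤ ((j:ℝ)+1)/q) :
    0 ≤ Tw q t ∧ Tw q t ≤ 1 ∧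
      Tw q t * (2 - Tw q t) = (2*(q:ℝ)*t - 2*j) * (2*(j:ℝ)+2 - 2*(q:ℝ)*t) := by
  have hQ : (0:ℝ) < q := by exact_mod_cast hq
  have hl' : (j:ℝ) ≤ q * t := by rw [div_le_iff₀ hQ] at hl; linarith
  have hr' : (q:ℝ) * t ≤ (j:ℝ) + 1 := by rw [le_div_iff₀ hQ] at hr; linarith
  rw [Tw_cell hq hj hl hr]
  rcases le_or_gt t ((2*(j:ℝ)+1)/(2*(q:ℝ))) with h | h
  · have h' : 2*(q:ℝ)*t ≤ 2*(j:ℝ)+1 := by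
      rw [le_div_iff₀ (by positivity)] at h; linarith
    rw [relu_of_nonpos (by linarith)]
    refine ⟨by linarith, by linarith, by ring⟩
  · have h' : 2*(j:ℝ)+1 ≤ 2*(q:ℝ)*t := by
      rw [div_lt_iff₀ (by positivity)] at h
      linarith
    rw [relu_of_nonneg (by linarith)]
    have hc : 4*(q:ℝ)*(t - (2*(j:ℝ)+1)/(2*(q:ℝ))) = 4*(q:ℝ)*t - 2*(2*(j:ℝ)+1) := by
      field_simp; ring
    constructor
    · nlinarith [hc]
    constructor
    · nlinarith [hc]
    · nlinarith [hc]

lemma Tw_mem (hq : 1 ≤ q) {t : ℝ} (h0 : 0 ≤ t) (h1 : t ≤ 1) :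
    0 ≤ Tw q t ∧ Tw q t ≤ 1 := by
  obtain ⟨j, hj, hl, hr⟩ := exists_cell hq h0 h1
  exact ⟨(Tw_cell_props hq hj hl hr).1, (Tw_cell_props hq hj hl hr).2.1⟩

lemma Tw_zero (hq : 1 ≤ q) : Tw q 0 = 0 := by
  have hQ : (0:ℝ) < q := by exact_mod_cast hq
  rw [Tw]
  apply Finset.sum_eq_zero
  intro m _
  apply tent_left hq
  positivity

lemma gauss_sum (j : ℕ) : (∑ m ∈ Finset.Icc 1 j, (m:ℝ)) = j*(j+1)/2 := by
  induction j with
  | zero => simp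
  | succ n ih =>
    rw [Finset.sum_Icc_succ_top (by omega), ih]
    push_cast
    ring

lemma C0_cell (hq : 1 ≤ q) {j : ℕ} {t : ℝ} (hj : j < q)
    (hl : (j:ℝ)/q ≤ t) (hr : t ≤ ((j:ℝ)+1)/q) :
    C0 q t = (((q:ℝ)-1)/q) * t - (2/q) * ((j:ℝ)*t - (j:ℝ)*((j:ℝ)+1)/(2*q)) := by
  have hQ : (0:ℝ) < q := by exact_mod_cast hq
  have ht0 : 0 ≤ t := le_trans (by positivity) hl
  rw [C0, relu_of_nonneg ht0]
  congr 1
  have hsum : (∑ m ∈ Finset.Icc 1 (q-1), relu (t - m/q)) =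
      ∑ m ∈ Finset.Icc 1 (q-1), (if m ≤ j then t - (m:ℝ)/q else 0) := by
    apply Finset.sum_congr rfl
    intro m _
    by_cases hmj : m ≤ j
    · rw [if_pos hmj]
      apply relu_of_nonneg
      have hmj' : (m:ℝ) ≤ (j:ℝ) := by exact_mod_cast hmj
      have h1 : (m:ℝ)/q ≤ (j:ℝ)/q := by gcongr
      linarith
    · rw [if_neg hmj]
      apply relu_of_nonpos
      have hjm : (j:ℝ) + 1 ≤ m := by exact_mod_cast Nat.succ_le_of_lt (by omega)
      have : t ≤ (m:ℝ)/q := le_trans hr (by rw [div_le_div_iff₀ hQ hQ]; nlinarith)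
      linarith
  rw [hsum, ← Finset.sum_filter]
  have hfil : (Finset.Icc 1 (q-1)).filter (fun m => m ≤ j) = Finset.Icc 1 j := by
    ext m
    simp only [Finset.mem_filter, Finset.mem_Icc]
    omega
  rw [hfil]
  have hcard : (Finset.Icc 1 j).card = j := by rw [Nat.card_Icc]; omega
  have hstep : (∑ m ∈ Finset.Icc 1 j, (t - (m:ℝ)/q)) = (j:ℝ)*t - (∑ m ∈ Finset.Icc 1 j, (m:ℝ))/q := by
    rw [Finset.sum_sub_distrib, Finset.sum_const, hcard, ← Finset.sum_div]
    ring
  rw [hstep, gauss_sum]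
  field_simp
  try ring

/-- The key identity: error of the first-step interpolation. -/
lemma J1 (hq : 1 ≤ q) {t : ℝ} (h0 : 0 ≤ t) (h1 : t ≤ 1) :
    (t - t^2) - C0 q t = Tw q t * (2 - Tw q t) / (4*(q:ℝ)^2) := by
  have hQ : (0:ℝ) < q := by exact_mod_cast hq
  obtain ⟨j, hj, hl, hr⟩ := exists_cell hq h0 h1
  rw [C0_cell hq hj hl hr, (Tw_cell_props hq hj hl hr).2.2]
  field_simp
  ring

/-- The key identity: error of the later-step interpolations. -/
lemma J2 (hq : 1 ≤ q) {z : ℝ} (h0 : 0 ≤ z) (h1 : z ≤ 1) :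
    z*(2 - z)/4 - CCf q z = Tw q z * (2 - Tw q z) / (16*(q:ℝ)^2) := by
  have := J1 hq h0 h1
  rw [CCf, relu_of_nonneg h0]
  have h16 : (16*(q:ℝ)^2) = (4*(q:ℝ)^2)*4 := by ring
  rw [h16, ← div_div, ← this]
  ring

/-- iterated triangle wave -/
def zs (q : ℕ) : ℕ → ℝ → ℝ
  | 0 => fun t => t
  | (l+1) => fun t => Tw q (zs q l t)

/-- grid-count scale factor: `emq q l = q * (2q)^l` -/
def emq (q l : ℕ) : ℝ := (q:ℝ) * (2*(q:ℝ))^l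

/-- the accumulator sequence: `Acc q l` is the PWL interpolation of `t^2` computed
after `l` correction steps -/
def Acc (q : ℕ) : ℕ → ℝ → ℝ
  | 0 => fun t => t
  | 1 => fun t => t - C0 q t
  | (l+2) => fun t => Acc q (l+1) t - CCf q (zs q (l+1) t) / (emq q l)^2

lemma zs_mem (hq : 1 ≤ q) {t : ℝ} (h0 : 0 ≤ t) (h1 : t ≤ 1) (l : ℕ) :
    0 ≤ zs q l t ∧ zs q l t ≤ 1 := by
  induction l with
  | zero => exact ⟨h0, h1⟩
  | succ n ih => exact Tw_mem hq ih.1 ih.2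

lemma zs_zero (hq : 1 ≤ q) (l : ℕ) : zs q l 0 = 0 := by
  induction l with
  | zero => rfl
  | succ n ih => show Tw q (zs q n 0) = 0; rw [ih, Tw_zero hq]

lemma em_pos (hq : 1 ≤ q) (l : ℕ) : 0 < emq q l := by
  have hQ : (0:ℝ) < q := by exact_mod_cast hq
  rw [emq]; positivity

lemma em_succ (q l : ℕ) : emq q (l+1) = 2*(q:ℝ) * emq q l := by
  rw [emq, emq, pow_succ]; ring

/-- main invariant: the accumulator equals `t²` plus an explicit PWL error term -/
lemma acc_inv (hq : 1 ≤ q) {t : ℝ} (h0 : 0 ≤ t) (h1 : t ≤ 1) :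
    ∀ l, 1 ≤ l → Acc q l t = t^2 + zs q l t * (2 - zs q l t) / (4 * (emq q (l-1))^2) := by
  have hQ : (0:ℝ) < q := by exact_mod_cast hq
  intro l hl
  induction l with
  | zero => omega
  | succ n ih =>
    rcases Nat.eq_zero_or_pos n with hn | hn
    · subst hn
      show t - C0 q t = _
      have hem : emq q (1-1) = (q:ℝ) := by simp [emq]
      rw [hem]
      have hJ := J1 hq h0 h1
      have hzs : zs q 1 t = Tw q t := rfl
      rw [hzs]
      linarith
    · have ihn := ih hn
      obtain ⟨m, rfl⟩ : ∃ m, n = m + 1 := ⟨n - 1, by omega⟩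
      have hAcc : Acc q (m+1+1) t = Acc q (m+1) t - CCf q (zs q (m+1) t) / (emq q m)^2 := rfl
      have hzz : zs q (m+1+1) t = Tw q (zs q (m+1) t) := rfl
      have hidx : m+1-1 = m := by omega
      rw [hidx] at ihn
      have hz := zs_mem hq h0 h1 (m+1)
      have key := J2 hq hz.1 hz.2
      have hempos := em_pos hq m
      have hem := em_succ q m
      rw [hAcc, ihn, hzz]
      have hidx2 : m+1+1-1 = m+1 := by omega
      rw [hidx2, hem]
      have e1 : t ^ 2 + zs q (m+1) t * (2 - zs q (m+1) t) / (4 * emq q m ^ 2)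
            - CCf q (zs q (m+1) t) / emq q m ^ 2
          = t ^ 2 + (zs q (m+1) t * (2 - zs q (m+1) t) / 4 - CCf q (zs q (m+1) t)) / emq q m ^ 2 := by
        field_simp
        ring
      rw [e1, key]
      rw [div_div]
      congr 1
      congr 1
      ring
lemma acc_nonneg (hq : 1 ≤ q) {t : ℝ} (h0 : 0 ≤ t) (h1 : t ≤ 1) (l : ℕ) :
    0 ≤ Acc q l t := by
  rcases Nat.eq_zero_or_pos l with h | h
  · subst h; exact h0
  · rw [acc_inv hq h0 h1 l h]
    have hz := zs_mem hq h0 h1 l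
    have := em_pos hq (l-1)
    have : 0 ≤ zs q l t * (2 - zs q l t) / (4 * (emq q (l-1))^2) := by
      apply div_nonneg
      · nlinarith [hz.1, hz.2]
      · positivity
    nlinarith [sq_nonneg t]

lemma acc_bounds (hq : 1 ≤ q) {t : ℝ} (h0 : 0 ≤ t) (h1 : t ≤ 1) {l : ℕ} (hl : 1 ≤ l) :
    t^2 ≤ Acc q l t ∧ Acc q l t ≤ t^2 + 1/(4 * (emq q (l-1))^2) := by
  rw [acc_inv hq h0 h1 l hl]
  have hz := zs_mem hq h0 h1 l
  have hem := em_pos hq (l-1)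
  constructor
  · have : 0 ≤ zs q l t * (2 - zs q l t) / (4 * (emq q (l-1))^2) := by
      apply div_nonneg
      · nlinarith [hz.1, hz.2]
      · positivity
    linarith
  · have hD : zs q l t * (2 - zs q l t) ≤ 1 := by nlinarith [sq_nonneg (zs q l t - 1)]
    have : zs q l t * (2 - zs q l t) / (4 * (emq q (l-1))^2) ≤ 1/(4 * (emq q (l-1))^2) := by
      exact div_le_div_of_nonneg_right hD (by positivity)
    linarith

lemma acc_zero (hq : 1 ≤ q) {l : ℕ} (hl : 1 ≤ l) : Acc q l 0 = 0 := by
  rw [acc_inv hq le_rfl zero_le_one l hl, zs_zero hq]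
  norm_num

end analytic
/-! ### Network layer maps -/

/-- total state dimension: three channels of width `2q+2` -/
def D3 (q : ℕ) : ℕ := 3*(2*q+2)

def toNat {d : ℕ} (x : Fin d → ℝ) : ℕ → ℝ := fun n => if h : n < d then x ⟨n, h⟩ else 0

def chan {d : ℕ} (x : Fin d → ℝ) (q c : ℕ) : ℕ → ℝ := fun n => toNat x (c*(2*q+2) + n)

def TwCombo (q : ℕ) (w : ℕ → ℝ) : ℝ :=
  ∑ m ∈ Finset.range q, 2*(q:ℝ)*(w (2*m) - 2*w (2*m+1) + w (2*m+2))

def C0Combo (q : ℕ) (w : ℕ → ℝ) : ℝ :=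
  (((q:ℝ)-1)/q) * w 0 - (2/q) * ∑ m ∈ Finset.Icc 1 (q-1), w (2*m)

def CCombo (q : ℕ) (w : ℕ → ℝ) : ℝ := (C0Combo q w + w 0)/4

def corr (q l : ℕ) (w : ℕ → ℝ) : ℝ :=
  if l = 1 then C0Combo q w else CCombo q w / (emq q (l-2))^2

def inval (x : Fin 2 → ℝ) (c : ℕ) : ℝ :=
  if c = 0 then (x 0 + x 1)/2 else if c = 1 then x 0/2 else x 1/2

def inAff (q : ℕ) : (Fin 2 → ℝ) → Fin (D3 q) → ℝ := fun x i =>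
  inval x (i.val / (2*q+2)) -
    (if i.val % (2*q+2) = 2*q+1 then 0 else ((i.val % (2*q+2) : ℕ) : ℝ)/(2*(q:ℝ)))

def stepAff (q l : ℕ) : (Fin (D3 q) → ℝ) → Fin (D3 q) → ℝ := fun v i =>
  if i.val % (2*q+2) = 2*q+1 then
    chan v q (i.val/(2*q+2)) (2*q+1) - corr q l (chan v q (i.val/(2*q+2)))
  else TwCombo q (chan v q (i.val/(2*q+2))) - ((i.val % (2*q+2) : ℕ) : ℝ)/(2*(q:ℝ))

def outAff (q r : ℕ) : (Fin (D3 q) → ℝ) → Fin 1 → ℝ := fun v _ =>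
  2*((chan v q 0 (2*q+1) - CCombo q (chan v q 0)/(emq q (r-2))^2)
   - (chan v q 1 (2*q+1) - CCombo q (chan v q 1)/(emq q (r-2))^2)
   - (chan v q 2 (2*q+1) - CCombo q (chan v q 2)/(emq q (r-2))^2))

/-! affineness of the layer maps -/

lemma aff_toNat (d m : ℕ) : Aff1 d (fun x => toNat x m) := by
  unfold toNat
  by_cases h : m < d
  · simp only [dif_pos h]; exact Aff1.proj d ⟨m, h⟩
  · simp only [dif_neg h]; exact Aff1.const d 0

lemma aff_chan (d q c n : ℕ) : Aff1 d (fun v : Fin d → ℝ => chan v q c n) := by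
  unfold chan; exact aff_toNat d _

lemma aff_TwCombo (d q c : ℕ) : Aff1 d (fun v : Fin d → ℝ => TwCombo q (chan v q c)) := by
  unfold TwCombo
  refine Aff1.finsetSum _ _ (fun m _ => ?_)
  exact Aff1.smul _ (Aff1.add (Aff1.sub (aff_chan d q c _) (Aff1.smul 2 (aff_chan d q c _)))
    (aff_chan d q c _))

lemma aff_C0Combo (d q c : ℕ) : Aff1 d (fun v : Fin d → ℝ => C0Combo q (chan v q c)) := by
  unfold C0Combo
  exact Aff1.sub (Aff1.smul _ (aff_chan d q c 0))
    (Aff1.smul _ (Aff1.finsetSum _ _ (fun m _ => aff_chan d q c _)))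

lemma aff_CCombo (d q c : ℕ) : Aff1 d (fun v : Fin d → ℝ => CCombo q (chan v q c)) := by
  unfold CCombo
  exact Aff1.div_const (Aff1.add (aff_C0Combo d q c) (aff_chan d q c 0)) 4

lemma aff_corr (d q l c : ℕ) : Aff1 d (fun v : Fin d → ℝ => corr q l (chan v q c)) := by
  unfold corr
  by_cases h : l = 1
  · simp only [if_pos h]; exact aff_C0Combo d q c
  · simp only [if_neg h]; exact Aff1.div_const (aff_CCombo d q c) _

lemma aff_inval (c : ℕ) : Aff1 2 (fun x => inval x c) := by
  unfold inval
  by_cases h0 : c = 0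
  · simp only [if_pos h0]
    exact Aff1.div_const (Aff1.add (Aff1.proj 2 0) (Aff1.proj 2 1)) 2
  · simp only [if_neg h0]
    by_cases h1 : c = 1
    · simp only [if_pos h1]; exact Aff1.div_const (Aff1.proj 2 0) 2
    · simp only [if_neg h1]; exact Aff1.div_const (Aff1.proj 2 1) 2

lemma aff_inAff (q : ℕ) : IsAffineMap 2 (D3 q) (inAff q) := by
  refine isAffineMap_of_aff1 (fun i => ?_)
  unfold inAff
  exact Aff1.sub (aff_inval _) (Aff1.const _ _)

lemma aff_stepAff (q l : ℕ) : IsAffineMap (D3 q) (D3 q) (stepAff q l) := by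
  refine isAffineMap_of_aff1 (fun i => ?_)
  unfold stepAff
  by_cases h : i.val % (2*q+2) = 2*q+1
  · simp only [if_pos h]
    exact Aff1.sub (aff_chan _ q _ _) (aff_corr _ q l _)
  · simp only [if_neg h]
    exact Aff1.sub (aff_TwCombo _ q _) (Aff1.const _ _)

lemma aff_outAff (q r : ℕ) : IsAffineMap (D3 q) 1 (outAff q r) := by
  refine isAffineMap_of_aff1 (fun i => ?_)
  unfold outAff
  refine Aff1.smul 2 (Aff1.sub (Aff1.sub ?_ ?_) ?_) <;>
    exact Aff1.sub (aff_chan _ q _ _) (Aff1.div_const (aff_CCombo _ q _) _)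
/-! ### Layer semantics -/

section semantics
variable {q : ℕ}

lemma chan_idx {q c n : ℕ} (hn : n < 2*q+2) :
    (c*(2*q+2)+n) / (2*q+2) = c ∧ (c*(2*q+2)+n) % (2*q+2) = n := by
  have h1 : c*(2*q+2)+n = n + (2*q+2)*c := by ring
  constructor
  · rw [h1, Nat.add_mul_div_left _ _ (by omega), Nat.div_eq_of_lt hn]
    omega
  · rw [h1, Nat.add_mul_mod_self_left, Nat.mod_eq_of_lt hn]

lemma TwCombo_eval (hq : 1 ≤ q) {w : ℕ → ℝ} {z : ℝ}
    (hw : ∀ n ≤ 2*q, w n = relu (z - (n:ℝ)/(2*(q:ℝ)))) : TwCombo q w = Tw q z := by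
  have hQ : (0:ℝ) < q := by exact_mod_cast hq
  rw [TwCombo, Tw]
  refine Finset.sum_congr rfl (fun m hm => ?_)
  have hm' : m < q := Finset.mem_range.mp hm
  rw [hw (2*m) (by omega), hw (2*m+1) (by omega), hw (2*m+2) (by omega), tent]
  have e1 : ((2*m:ℕ):ℝ)/(2*(q:ℝ)) = (m:ℝ)/q := by push_cast; field_simp
  have e2 : ((2*m+1:ℕ):ℝ)/(2*(q:ℝ)) = (2*(m:ℝ)+1)/(2*(q:ℝ)) := by push_cast; ring
  have e3 : ((2*m+2:ℕ):ℝ)/(2*(q:ℝ)) = ((m:ℝ)+1)/q := by push_cast; field_simp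
  rw [e1, e2, e3]

lemma C0Combo_eval (hq : 1 ≤ q) {w : ℕ → ℝ} {z : ℝ}
    (hw : ∀ n ≤ 2*q, w n = relu (z - (n:ℝ)/(2*(q:ℝ)))) : C0Combo q w = C0 q z := by
  have hQ : (0:ℝ) < q := by exact_mod_cast hq
  rw [C0Combo, C0]
  have h0 : w 0 = relu z := by rw [hw 0 (by omega)]; norm_num
  rw [h0]
  congr 1
  congr 1
  refine Finset.sum_congr rfl (fun m hm => ?_)
  have hm' : m ≤ q - 1 := (Finset.mem_Icc.mp hm).2
  rw [hw (2*m) (by omega)]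
  have e1 : ((2*m:ℕ):ℝ)/(2*(q:ℝ)) = (m:ℝ)/q := by push_cast; field_simp
  rw [e1]

lemma CCombo_eval (hq : 1 ≤ q) {w : ℕ → ℝ} {z : ℝ} (hz : 0 ≤ z)
    (hw : ∀ n ≤ 2*q, w n = relu (z - (n:ℝ)/(2*(q:ℝ)))) : CCombo q w = CCf q z := by
  rw [CCombo, CCf, C0Combo_eval hq hw]
  have h0 : w 0 = relu z := by rw [hw 0 (by omega)]; norm_num
  rw [h0]

/-- intended values of the hidden state at layer `l` (1-indexed) -/
def specv (q l : ℕ) (x : Fin 2 → ℝ) : Fin (D3 q) → ℝ := fun i =>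
  if i.val % (2*q+2) = 2*q+1 then relu (Acc q (l-1) (inval x (i.val/(2*q+2))))
  else relu (zs q (l-1) (inval x (i.val/(2*q+2))) - ((i.val % (2*q+2) : ℕ):ℝ)/(2*(q:ℝ)))

lemma chan_specv (hq : 1 ≤ q) {c n : ℕ} (hc : c < 3) (hn : n < 2*q+2) (l : ℕ) (x : Fin 2 → ℝ) :
    chan (specv q l x) q c n =
      if n = 2*q+1 then relu (Acc q (l-1) (inval x c))
      else relu (zs q (l-1) (inval x c) - (n:ℝ)/(2*(q:ℝ))) := by
  have hlt : c*(2*q+2)+n < D3 q := by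
    have : c ≤ 2 := by omega
    rw [D3]; nlinarith [hn]
  rw [chan, toNat, dif_pos hlt]
  have hidx := chan_idx (c := c) hn
  show specv q l x ⟨c*(2*q+2)+n, hlt⟩ = _
  rw [specv]
  simp only [hidx.1, hidx.2]

lemma inval_mem {x : Fin 2 → ℝ} (hx0 : x 0 ∈ Set.Icc (0:ℝ) 1) (hx1 : x 1 ∈ Set.Icc (0:ℝ) 1)
    (c : ℕ) : 0 ≤ inval x c ∧ inval x c ≤ 1 := by
  obtain ⟨a0, a1⟩ := hx0
  obtain ⟨b0, b1⟩ := hx1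
  rw [inval]
  split_ifs <;> constructor <;> linarith

/-- the first layer produces the layer-1 state -/
lemma layer_one (q : ℕ) (x : Fin 2 → ℝ) :
    (fun i => max (inAff q x i) 0) = specv q 1 x := by
  funext i
  rw [inAff, specv]
  by_cases h : i.val % (2*q+2) = 2*q+1
  · simp only [if_pos h]
    show max (inval x _ - 0) 0 = relu (Acc q 0 (inval x _))
    rw [sub_zero]
    rfl
  · simp only [if_neg h]
    rfl

/-- hidden layer step: applying layer `l`'s affine map and ReLU to the layer-`l` state
yields the layer-`l+1` state -/
lemma layer_step (hq : 1 ≤ q) {l : ℕ} (hl : 1 ≤ l) (x : Fin 2 → ℝ)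
    (hx0 : x 0 ∈ Set.Icc (0:ℝ) 1) (hx1 : x 1 ∈ Set.Icc (0:ℝ) 1) :
    (fun i => max (stepAff q l (specv q l x) i) 0) = specv q (l+1) x := by
  funext i
  have hD : 0 < 2*q+2 := by omega
  have hclt : i.val / (2*q+2) < 3 := by
    rw [Nat.div_lt_iff_lt_mul hD]
    have := i.isLt
    simp only [D3] at this
    omega
  have hnlt : i.val % (2*q+2) < 2*q+2 := Nat.mod_lt _ hD
  have htc := inval_mem hx0 hx1 (i.val / (2*q+2))
  have hw : ∀ m ≤ 2*q, chan (specv q l x) q (i.val / (2*q+2)) m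
      = relu (zs q (l-1) (inval x (i.val / (2*q+2))) - (m:ℝ)/(2*(q:ℝ))) := by
    intro m hm
    rw [chan_specv hq hclt (by omega) l x, if_neg (by omega)]
  have haccval : chan (specv q l x) q (i.val / (2*q+2)) (2*q+1)
      = Acc q (l-1) (inval x (i.val / (2*q+2))) := by
    rw [chan_specv hq hclt (by omega) l x, if_pos rfl]
    exact relu_of_nonneg (acc_nonneg hq htc.1 htc.2 _)
  show max (stepAff q l (specv q l x) i) 0 = specv q (l+1) x i
  simp only [stepAff, specv]
  by_cases h : i.val % (2*q+2) = 2*q+1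
  · rw [if_pos h, if_pos h, haccval]
    have hidx : (l+1)-1 = l := by omega
    rw [hidx]
    rcases Nat.eq_or_lt_of_le hl with h1 | h1
    · -- l = 1
      have hl1 : l = 1 := h1.symm
      subst hl1
      rw [corr, if_pos rfl, C0Combo_eval hq hw]
      show max (Acc q 0 (inval x _) - C0 q (zs q 0 (inval x _))) 0 = _
      have : Acc q 0 (inval x (i.val / (2*q+2))) = inval x (i.val / (2*q+2)) := rfl
      rw [this]
      have : zs q 0 (inval x (i.val / (2*q+2))) = inval x (i.val / (2*q+2)) := rfl
      rw [this]
      have : Acc q 1 (inval x (i.val / (2*q+2)))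
          = inval x (i.val / (2*q+2)) - C0 q (inval x (i.val / (2*q+2))) := rfl
      rw [this]
      rfl
    · -- l ≥ 2
      obtain ⟨m, rfl⟩ : ∃ m, l = m + 2 := ⟨l - 2, by omega⟩
      rw [corr, if_neg (by omega)]
      have hzmem := zs_mem hq htc.1 htc.2 (m+2-1)
      rw [CCombo_eval hq hzmem.1 hw]
      have e1 : (m+2)-1 = m+1 := by omega
      have e2 : (m+2)-2 = m := by omega
      rw [e1, e2]
      have : Acc q (m+2) (inval x (i.val / (2*q+2)))
          = Acc q (m+1) (inval x (i.val / (2*q+2)))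
            - CCf q (zs q (m+1) (inval x (i.val / (2*q+2)))) / (emq q m)^2 := rfl
      rw [this]
      rw [e1] at hzmem
      rfl
  · rw [if_neg h, if_neg h, TwCombo_eval hq hw]
    have hidx : (l+1)-1 = (l-1)+1 := by omega
    rw [hidx]
    have : zs q ((l-1)+1) (inval x (i.val / (2*q+2)))
        = Tw q (zs q (l-1) (inval x (i.val / (2*q+2)))) := rfl
    rw [this]
    rfl

/-- output layer evaluation -/
lemma out_eval (hq : 1 ≤ q) {r : ℕ} (hr : 2 ≤ r) (x : Fin 2 → ℝ)
    (hx0 : x 0 ∈ Set.Icc (0:ℝ) 1) (hx1 : x 1 ∈ Set.Icc (0:ℝ) 1) :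
    outAff q r (specv q r x) = fun _ =>
      2*(Acc q r (inval x 0) - Acc q r (inval x 1) - Acc q r (inval x 2)) := by
  funext j
  rw [outAff]
  have key : ∀ c, c < 3 → chan (specv q r x) q c (2*q+1)
      - CCombo q (chan (specv q r x) q c)/(emq q (r-2))^2 = Acc q r (inval x c) := by
    intro c hc
    have htc := inval_mem hx0 hx1 c
    have hw : ∀ m ≤ 2*q, chan (specv q r x) q c m
        = relu (zs q (r-1) (inval x c) - (m:ℝ)/(2*(q:ℝ))) := by
      intro m hm
      rw [chan_specv hq hc (by omega) r x, if_neg (by omega)]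
    have haccval : chan (specv q r x) q c (2*q+1) = Acc q (r-1) (inval x c) := by
      rw [chan_specv hq hc (by omega) r x, if_pos rfl]
      exact relu_of_nonneg (acc_nonneg hq htc.1 htc.2 _)
    have hzmem := zs_mem hq htc.1 htc.2 (r-1)
    rw [haccval, CCombo_eval hq hzmem.1 hw]
    obtain ⟨m, rfl⟩ : ∃ m, r = m + 2 := ⟨r - 2, by omega⟩
    have e1 : (m+2)-1 = m+1 := by omega
    have e2 : (m+2)-2 = m := by omega
    rw [e1, e2]
    rfl
  rw [key 0 (by omega), key 1 (by omega), key 2 (by omega)]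

end semantics
/-! ### The two-input multiplication gate as a network -/

def Gchain (q r : ℕ) : ℕ → ((Fin (D3 q) → ℝ) → Fin 1 → ℝ)
  | 0 => outAff q r
  | (j+1) => fun v => Gchain q r j (fun i => max (stepAff q (r-1-j) v i) 0)

lemma Gchain_net (q r j : ℕ) : ReluNetExact (D3 q) 1 (Gchain q r j) (D3 q) (j+1) := by
  induction j with
  | zero => exact .affine (aff_outAff q r)
  | succ n ih => exact .comp le_rfl (aff_stepAff q (r-1-n)) ih

lemma Gchain_spec {q : ℕ} (hq : 1 ≤ q) {r : ℕ} (hr : 2 ≤ r) (x : Fin 2 → ℝ)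
    (hx0 : x 0 ∈ Set.Icc (0:ℝ) 1) (hx1 : x 1 ∈ Set.Icc (0:ℝ) 1) :
    ∀ j, j ≤ r-1 → Gchain q r j (specv q (r-j) x) =
      fun _ => 2*(Acc q r (inval x 0) - Acc q r (inval x 1) - Acc q r (inval x 2)) := by
  intro j
  induction j with
  | zero =>
    intro _
    have h0 : r - 0 = r := by omega
    rw [h0]
    exact out_eval hq hr x hx0 hx1
  | succ n ih =>
    intro hjr
    show Gchain q r n (fun i => max (stepAff q (r-1-n) (specv q (r-(n+1)) x) i) 0) = _
    have hidx : r-(n+1) = r-1-n := by omega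
    rw [hidx, layer_step hq (by omega) x hx0 hx1]
    have hidx2 : (r-1-n)+1 = r-n := by omega
    rw [hidx2]
    exact ih (by omega)

def coreF (q r : ℕ) : (Fin 2 → ℝ) → Fin 1 → ℝ :=
  fun x => Gchain q r (r-1) (fun i => max (inAff q x i) 0)

lemma coreF_net (q : ℕ) {r : ℕ} (hr : 1 ≤ r) : ReluNetExact 2 1 (coreF q r) (D3 q) (r+1) := by
  have h := ReluNetExact.comp (le_refl (D3 q)) (aff_inAff q) (Gchain_net q r (r-1))
  have he : (r-1+1)+1 = r+1 := by omega
  rw [he] at h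
  exact h

lemma coreF_eval {q : ℕ} (hq : 1 ≤ q) {r : ℕ} (hr : 2 ≤ r) (x : Fin 2 → ℝ)
    (hx0 : x 0 ∈ Set.Icc (0:ℝ) 1) (hx1 : x 1 ∈ Set.Icc (0:ℝ) 1) :
    coreF q r x = fun _ =>
      2*(Acc q r ((x 0 + x 1)/2) - Acc q r (x 0/2) - Acc q r (x 1/2)) := by
  rw [coreF, layer_one q x]
  have h1 : specv q 1 x = specv q (r-(r-1)) x := by
    have : r-(r-1) = 1 := by omega
    rw [this]
  rw [h1, Gchain_spec hq hr x hx0 hx1 (r-1) le_rfl]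
  have e0 : inval x 0 = (x 0 + x 1)/2 := rfl
  have e1 : inval x 1 = x 0/2 := rfl
  have e2 : inval x 2 = x 1/2 := rfl
  rw [e0, e1, e2]

/-- error scale of a single squaring unit -/
def epsq (q r : ℕ) : ℝ := 1/(4*(emq q (r-1))^2)

lemma epsq_pos {q : ℕ} (hq : 1 ≤ q) (r : ℕ) : 0 < epsq q r := by
  have := em_pos hq (r-1)
  rw [epsq]; positivity

lemma coreF_err {q : ℕ} (hq : 1 ≤ q) {r : ℕ} (hr : 2 ≤ r) (x : Fin 2 → ℝ)
    (hx0 : x 0 ∈ Set.Icc (0:ℝ) 1) (hx1 : x 1 ∈ Set.Icc (0:ℝ) 1) :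
    |coreF q r x 0 - x 0 * x 1| ≤ 6 * epsq q r := by
  rw [coreF_eval hq hr x hx0 hx1]
  obtain ⟨a0, a1⟩ := hx0
  obtain ⟨b0, b1⟩ := hx1
  have hu : (x 0 + x 1)/2 ∈ Set.Icc (0:ℝ) 1 := ⟨by linarith, by linarith⟩
  have hv : x 0/2 ∈ Set.Icc (0:ℝ) 1 := ⟨by linarith, by linarith⟩
  have hw : x 1/2 ∈ Set.Icc (0:ℝ) 1 := ⟨by linarith, by linarith⟩
  have hAu := acc_bounds hq hu.1 hu.2 (l := r) (by omega)
  have hAv := acc_bounds hq hv.1 hv.2 (l := r) (by omega)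
  have hAw := acc_bounds hq hw.1 hw.2 (l := r) (by omega)
  have hE : (1:ℝ)/(4 * (emq q (r-1))^2) = epsq q r := rfl
  rw [hE] at hAu hAv hAw
  have hring : 2*(((x 0 + x 1)/2)^2 - (x 0/2)^2 - (x 1/2)^2) = x 0 * x 1 := by ring
  rw [abs_le]
  constructor <;> nlinarith [hAu.1, hAu.2, hAv.1, hAv.2, hAw.1, hAw.2]

lemma coreF_zero {q : ℕ} (hq : 1 ≤ q) {r : ℕ} (hr : 2 ≤ r) (x : Fin 2 → ℝ)
    (hx0 : x 0 ∈ Set.Icc (0:ℝ) 1) (hx1 : x 1 ∈ Set.Icc (0:ℝ) 1)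
    (h : x 0 = 0 ∨ x 1 = 0) : coreF q r x 0 = 0 := by
  rw [coreF_eval hq hr x hx0 hx1]
  have hz := acc_zero hq (l := r) (by omega)
  rcases h with h | h
  · have e1 : (x 0 + x 1)/2 = x 1/2 := by rw [h]; ring
    have e2 : x 0/2 = 0 := by rw [h]; ring
    rw [e1, e2, hz]
    ring
  · have e1 : (x 0 + x 1)/2 = x 0/2 := by rw [h]; ring
    have e2 : x 1/2 = 0 := by rw [h]; ring
    rw [e1, e2, hz]
    ring

/-! ### clamping to [0,1] -/

def clampf (z : ℝ) : ℝ := 1 - max (1 - max z 0) 0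

lemma clampf_mem (z : ℝ) : 0 ≤ clampf z ∧ clampf z ≤ 1 := by
  rw [clampf]
  rcases le_or_gt z 0 with h | h
  · rw [max_eq_right h]; norm_num
  · rw [max_eq_left h.le]
    rcases le_or_gt z 1 with h2 | h2
    · rw [max_eq_left (by linarith)]; constructor <;> linarith
    · rw [max_eq_right (by linarith)]; norm_num

lemma clampf_contract {z p : ℝ} (h0 : 0 ≤ p) (h1 : p ≤ 1) :
    |clampf z - p| ≤ |z - p| := by
  rcases le_or_gt z 0 with h | h
  · have hc : clampf z = 0 := by rw [clampf, max_eq_right h]; norm_num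
    rw [hc, abs_of_nonpos (by linarith), abs_of_nonpos (by linarith)]
    linarith
  · rcases le_or_gt z 1 with h2 | h2
    · have hc : clampf z = z := by
        rw [clampf, max_eq_left h.le, max_eq_left (by linarith)]; ring
      rw [hc]
    · have hc : clampf z = 1 := by
        rw [clampf, max_eq_left h.le, max_eq_right (by linarith)]; ring
      rw [hc, abs_of_nonneg (by linarith), abs_of_nonneg (by linarith)]
      linarith

lemma clampf_zero : clampf 0 = 0 := by rw [clampf]; norm_num

/-- the clamp as a 3-layer net (width 1) -/
lemma clamp_net (N : ℕ) (hN : 1 ≤ N) :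
    ReluNetExact 1 1 (fun (x : Fin 1 → ℝ) (_ : Fin 1) => clampf (x 0)) N 3 := by
  have aff1 : IsAffineMap 1 1 (fun (w : Fin 1 → ℝ) (_ : Fin 1) => 1 - w 0) :=
    isAffineMap_of_aff1 (fun _ => Aff1.sub (Aff1.const _ _) (Aff1.proj _ 0))
  have affid : IsAffineMap 1 1 (fun (w : Fin 1 → ℝ) => w) := isAffineMap_id 1
  have n1 := ReluNetExact.affine (N := N) aff1
  have n2 := ReluNetExact.comp hN aff1 n1
  have n3 := ReluNetExact.comp hN affid n2
  exact net_congr n3 rfl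

/-- the multiplication gate -/
def phiF (q r : ℕ) : (Fin 2 → ℝ) → Fin 1 → ℝ := fun x _ => clampf (coreF q r x 0)

lemma phiF_net (q : ℕ) {r : ℕ} (hr : 1 ≤ r) : ReluNetExact 2 1 (phiF q r) (D3 q) (r+3) := by
  have hD : 1 ≤ D3 q := by rw [D3]; omega
  have h := net_comp (coreF_net q hr) (clamp_net (D3 q) hD)
  have he : (r+1)+3-1 = r+3 := by omega
  rw [he] at h
  exact net_congr h rfl

lemma phiF_props {q : ℕ} (hq : 1 ≤ q) {r : ℕ} (hr : 2 ≤ r) (x : Fin 2 → ℝ)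
    (hx0 : x 0 ∈ Set.Icc (0:ℝ) 1) (hx1 : x 1 ∈ Set.Icc (0:ℝ) 1) :
    (0 ≤ phiF q r x 0 ∧ phiF q r x 0 ≤ 1) ∧
    |phiF q r x 0 - x 0 * x 1| ≤ 6 * epsq q r ∧
    ((x 0 = 0 ∨ x 1 = 0) → phiF q r x 0 = 0) := by
  refine ⟨clampf_mem _, ?_, ?_⟩
  · have hp : 0 ≤ x 0 * x 1 ∧ x 0 * x 1 ≤ 1 := by
      obtain ⟨a0, a1⟩ := hx0; obtain ⟨b0, b1⟩ := hx1
      constructor <;> nlinarith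
    calc |phiF q r x 0 - x 0 * x 1| ≤ |coreF q r x 0 - x 0 * x 1| :=
          clampf_contract hp.1 hp.2
      _ ≤ 6 * epsq q r := coreF_err hq hr x hx0 hx1
  · intro h
    show clampf (coreF q r x 0) = 0
    rw [coreF_zero hq hr x hx0 hx1 h, clampf_zero]
/-! ### chaining the gates -/

lemma net_cast {a a' b b' N L : ℕ} (ha : a = a') (hb : b = b')
    {f : (Fin a → ℝ) → Fin b → ℝ} (h : ReluNetExact a b f N L) :
    ReluNetExact a' b' (fun x i => f (fun j => x (Fin.cast ha j)) (Fin.cast hb.symm i)) N L := by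
  subst ha; subst hb
  exact net_congr h rfl

def prodj (k : ℕ) (x : Fin k → ℝ) (j : ℕ) : ℝ :=
  ∏ i ∈ Finset.univ.filter (fun i : Fin k => i.val ≤ j), x i

lemma prodj_one {k : ℕ} (hk : 2 ≤ k) (x : Fin k → ℝ) :
    prodj k x 1 = x ⟨0, by omega⟩ * x ⟨1, by omega⟩ := by
  rw [prodj]
  have hfil : Finset.univ.filter (fun i : Fin k => i.val ≤ 1)
      = {(⟨0, by omega⟩ : Fin k), ⟨1, by omega⟩} := by
    ext i
    simp only [Finset.mem_filter, Finset.mem_univ, true_and, Finset.mem_insert,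
      Finset.mem_singleton, Fin.ext_iff]
    omega
  rw [hfil, Finset.prod_pair (by simp [Fin.ext_iff])]

lemma prodj_step {k j : ℕ} (hj : j + 1 ≤ k - 1) (x : Fin k → ℝ) :
    prodj k x (j+1) = prodj k x j * x ⟨j+1, by omega⟩ := by
  rw [prodj, prodj]
  have hfil : Finset.univ.filter (fun i : Fin k => i.val ≤ j+1)
      = insert (⟨j+1, by omega⟩ : Fin k) (Finset.univ.filter (fun i : Fin k => i.val ≤ j)) := by
    ext i
    simp only [Finset.mem_filter, Finset.mem_univ, true_and, Finset.mem_insert, Fin.ext_iff]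
    omega
  rw [hfil, Finset.prod_insert (by simp)]
  ring

lemma prodj_full {k : ℕ} (hk : 1 ≤ k) (x : Fin k → ℝ) :
    prodj k x (k-1) = ∏ i, x i := by
  rw [prodj]
  congr 1
  ext i
  simp only [Finset.mem_filter, Finset.mem_univ, true_and, iff_true]
  omega

lemma prodj_mem {k : ℕ} (x : Fin k → ℝ) (hx : ∀ i, x i ∈ Set.Icc (0:ℝ) 1) (j : ℕ) :
    0 ≤ prodj k x j ∧ prodj k x j ≤ 1 := by
  constructor
  · exact Finset.prod_nonneg (fun i _ => (hx i).1)
  · exact Finset.prod_le_one (fun i _ => (hx i).1) (fun i _ => (hx i).2)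

/-- the chain of multiplication gates -/
lemma chain {q : ℕ} (hq : 1 ≤ q) {r : ℕ} (hr : 2 ≤ r) {k : ℕ} (hk : 2 ≤ k) :
    ∀ j, ∀ (hj0 : 1 ≤ j) (hjk : j ≤ k-1),
    ∃ P : (Fin k → ℝ) → (Fin (k-j) → ℝ),
      ReluNetExact k (k-j) P (D3 q + (k-2)) (j*(r+2)+1) ∧
      ∀ x : Fin k → ℝ, (∀ i, x i ∈ Set.Icc (0:ℝ) 1) →
        (0 ≤ P x ⟨0, by omega⟩ ∧ P x ⟨0, by omega⟩ ≤ 1) ∧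
        |P x ⟨0, by omega⟩ - prodj k x j| ≤ j * (6 * epsq q r) ∧
        ((∃ i : Fin k, i.val ≤ j ∧ x i = 0) → P x ⟨0, by omega⟩ = 0) ∧
        (∀ m : Fin (k-j), 1 ≤ m.val → P x m = x ⟨m.val + j, by omega⟩) := by
  intro j
  induction j with
  | zero => omega
  | succ n ih =>
    intro hj0 hj1
    rcases Nat.eq_zero_or_pos n with hn | hn
    · -- base case: j = 1
      subst hn
      obtain ⟨g, hgnet, hgfst, hgsnd⟩ := net_withCarries (phiF_net q (r := r) (by omega)) (k-2)
      have ha : 2+(k-2) = k := by omega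
      have hb : 1+(k-2) = k-1 := by omega
      refine ⟨fun x i => g (fun jj => x (Fin.cast ha jj)) (Fin.cast hb.symm i), ?_, ?_⟩
      · have hnet := net_cast ha hb hgnet
        have hmono := net_mono_width hnet (N' := D3 q + (k-2)) le_rfl
        have hd : r + 3 = 1*(r+2)+1 := by omega
        rw [hd] at hmono
        exact hmono
      · intro x hx
        have hc0 : (Fin.cast hb.symm ⟨0, by omega⟩ : Fin (1+(k-2)))
            = Fin.castAdd (k-2) (0 : Fin 1) := by
          apply Fin.ext; simp
        set y : Fin (2+(k-2)) → ℝ := fun jj => x (Fin.cast ha jj) with hy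
        have hval : g y (Fin.castAdd (k-2) 0) = phiF q r (fun j2 => y (Fin.castAdd (k-2) j2)) 0 :=
          hgfst y 0
        set x2 : Fin 2 → ℝ := fun j2 => y (Fin.castAdd (k-2) j2) with hx2
        have hx20 : x2 0 = x ⟨0, by omega⟩ := by
          rw [hx2, hy]; all_goals (congr 1 <;> exact Fin.ext (by simp))
        have hx21 : x2 1 = x ⟨1, by omega⟩ := by
          rw [hx2, hy]; all_goals (congr 1 <;> exact Fin.ext (by simp))
        have hm0 : x2 0 ∈ Set.Icc (0:ℝ) 1 := by rw [hx20]; exact hx _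
        have hm1 : x2 1 ∈ Set.Icc (0:ℝ) 1 := by rw [hx21]; exact hx _
        have hprops := phiF_props hq hr x2 hm0 hm1
        have hPval : g y (Fin.cast hb.symm ⟨0, by omega⟩) = phiF q r x2 0 := by
          rw [hc0]; exact hval
        have hPval' : (fun (x : Fin k → ℝ) (i : Fin (k-(0+1))) =>
            g (fun jj => x (Fin.cast ha jj)) (Fin.cast hb.symm i)) x ⟨0, by omega⟩
            = phiF q r x2 0 := hPval
        refine ⟨?_, ?_, ?_, ?_⟩
        · rw [hPval']; exact hprops.1
        · rw [hPval', prodj_one hk, ← hx20, ← hx21]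
          have := hprops.2.1
          simpa using this
        · rintro ⟨i, hi, hxi⟩
          rw [hPval']
          apply hprops.2.2
          rcases Nat.le_one_iff_eq_zero_or_eq_one.mp hi with h0 | h1
          · left; rw [hx20]; rw [← hxi]; congr 1; apply Fin.ext; simp [h0]
          · right; rw [hx21]; rw [← hxi]; congr 1; apply Fin.ext; simp [h1]
        · intro m hm
          show g y (Fin.cast hb.symm m) = _
          have hmm : (Fin.cast hb.symm m : Fin (1+(k-2)))
              = Fin.natAdd 1 ⟨m.val - 1, by have := m.isLt; omega⟩ := by
            apply Fin.ext; simp; omega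
          rw [hmm, hgsnd y ⟨m.val - 1, by have := m.isLt; omega⟩ ?_]
          · rw [hy]; beta_reduce; congr 1; apply Fin.ext; simp; have := m.isLt; omega
          · rw [hy]; beta_reduce
            have : x (Fin.cast ha (Fin.natAdd 2 ⟨m.val - 1, by have := m.isLt; omega⟩))
                = x ⟨m.val + 1, by have := m.isLt; omega⟩ := by
              congr 1; apply Fin.ext; simp; have := m.isLt; omega
            rw [this]
            exact (hx _).1
    · -- inductive step: from j = n to j = n+1, with 1 ≤ n, n+1 ≤ k-1
      obtain ⟨P, hPnet, hPsem⟩ := ih hn (by omega)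
      obtain ⟨g, hgnet, hgfst, hgsnd⟩ := net_withCarries (phiF_net q (r := r) (by omega)) (k-n-2)
      have ha : 2+(k-n-2) = k-n := by omega
      have hb : 1+(k-n-2) = k-(n+1) := by omega
      set stage : (Fin (k-n) → ℝ) → Fin (k-(n+1)) → ℝ :=
        fun y i => g (fun jj => y (Fin.cast ha jj)) (Fin.cast hb.symm i) with hstage
      have hstnet : ReluNetExact (k-n) (k-(n+1)) stage (D3 q + (k-2)) (r+3) :=
        net_mono_width (net_cast ha hb hgnet) (by omega)
      refine ⟨fun x => stage (P x), ?_, ?_⟩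
      · have hcomp := net_comp hPnet hstnet
        have hd : (n*(r+2)+1) + (r+3) - 1 = (n+1)*(r+2)+1 := by ring_nf; omega
        rw [hd] at hcomp
        exact hcomp
      · intro x hx
        obtain ⟨hymem, hyerr, hyzero, hycarry⟩ := hPsem x hx
        set y := P x with hyy
        have hc0 : (Fin.cast hb.symm ⟨0, by omega⟩ : Fin (1+(k-n-2)))
            = Fin.castAdd (k-n-2) (0 : Fin 1) := by
          apply Fin.ext; simp
        set y' : Fin (2+(k-n-2)) → ℝ := fun jj => y (Fin.cast ha jj) with hy'
        set x2 : Fin 2 → ℝ := fun j2 => y' (Fin.castAdd (k-n-2) j2) with hx2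
        have hx20 : x2 0 = y ⟨0, by omega⟩ := by
          rw [hx2, hy']; all_goals (congr 1 <;> exact Fin.ext (by simp))
        have hx21 : x2 1 = x ⟨n+1, by omega⟩ := by
          rw [hx2, hy']; beta_reduce
          have h1 : (Fin.cast ha (Fin.castAdd (k-n-2) (1 : Fin 2)) : Fin (k-n))
              = ⟨1, by omega⟩ := by apply Fin.ext; simp
          rw [h1, hycarry ⟨1, by omega⟩ (by simp)]
          congr 1
          exact Fin.ext (by simp; omega)
        have hm0 : x2 0 ∈ Set.Icc (0:ℝ) 1 := by rw [hx20]; exact ⟨hymem.1, hymem.2⟩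
        have hm1 : x2 1 ∈ Set.Icc (0:ℝ) 1 := by rw [hx21]; exact hx _
        have hprops := phiF_props hq hr x2 hm0 hm1
        have hPval : (fun x => stage (P x)) x (⟨0, by omega⟩ : Fin (k-(n+1))) = phiF q r x2 0 := by
          show g y' (Fin.cast hb.symm ⟨0, by omega⟩) = _
          rw [hc0]
          exact hgfst y' 0
        refine ⟨?_, ?_, ?_, ?_⟩
        · rw [hPval]; exact hprops.1
        · rw [hPval, prodj_step hj1]
          have e1 := hprops.2.1
          have e2 : |x2 0 * x2 1 - prodj k x n * x ⟨n+1, by omega⟩| ≤ n * (6 * epsq q r) := by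
            rw [hx21]
            have : x2 0 * x ⟨n+1, by omega⟩ - prodj k x n * x ⟨n+1, by omega⟩
                = (x2 0 - prodj k x n) * x ⟨n+1, by omega⟩ := by ring
            rw [this, abs_mul]
            have hxa := hx (⟨n+1, by omega⟩ : Fin k)
            have hab : |x ⟨n+1, by omega⟩| ≤ 1 := by
              rw [abs_of_nonneg hxa.1]; exact hxa.2
            have h1 : |x2 0 - prodj k x n| ≤ n * (6 * epsq q r) := by
              rw [hx20]; exact hyerr
            calc |x2 0 - prodj k x n| * |x ⟨n+1, by omega⟩|
                ≤ |x2 0 - prodj k x n| * 1 := by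
                  apply mul_le_mul_of_nonneg_left hab (abs_nonneg _)
              _ ≤ n * (6 * epsq q r) := by rw [mul_one]; exact h1
          calc |phiF q r x2 0 - prodj k x n * x ⟨n+1, by omega⟩|
              ≤ |phiF q r x2 0 - x2 0 * x2 1| + |x2 0 * x2 1 - prodj k x n * x ⟨n+1, by omega⟩| := by
                have := abs_sub_le (phiF q r x2 0) (x2 0 * x2 1) (prodj k x n * x ⟨n+1, by omega⟩)
                simpa using this
            _ ≤ 6 * epsq q r + n * (6 * epsq q r) := add_le_add e1 e2
            _ = (n+1 : ℕ) * (6 * epsq q r) := by push_cast; ring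
        · rintro ⟨i, hi, hxi⟩
          rw [hPval]
          apply hprops.2.2
          rcases Nat.lt_or_ge i.val (n+1) with h0 | h1
          · left; rw [hx20]; exact hyzero ⟨i, by omega, hxi⟩
          · right; rw [hx21]; rw [← hxi]; congr 1; apply Fin.ext; simp; omega
        · intro m hm
          show g y' (Fin.cast hb.symm m) = _
          have hmm : (Fin.cast hb.symm m : Fin (1+(k-n-2)))
              = Fin.natAdd 1 ⟨m.val - 1, by have := m.isLt; omega⟩ := by
            apply Fin.ext; simp; omega
          have hcar : (Fin.cast ha (Fin.natAdd 2 ⟨m.val - 1, by have := m.isLt; omega⟩) : Fin (k-n))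
              = ⟨m.val + 1, by have := m.isLt; omega⟩ := by
            apply Fin.ext; simp; have := m.isLt; omega
          rw [hmm, hgsnd y' ⟨m.val - 1, by have := m.isLt; omega⟩ ?_]
          · rw [hy']; beta_reduce
            rw [hcar, hycarry ⟨m.val+1, by have := m.isLt; omega⟩ (by simp)]
            congr 1; apply Fin.ext; simp; omega
          · rw [hy']; beta_reduce
            rw [hcar, hycarry ⟨m.val+1, by have := m.isLt; omega⟩ (by simp)]
            exact (hx _).1

end S13

open S13

/-- Lemma `product app`: approximation of the product function on
`[0,1]^k`. -/
theorem stmt13 (N L k : ℕ) (hN : 0 < N) (hL : 0 < L) (hk : 2 ≤ k) :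
    ∃ Φ : (Fin k → ℝ) → ℝ,
      IsReluNet1 k Φ (9 * N + k + 7) (7 * k * (k - 1) * L) ∧
      (∀ x : Fin k → ℝ, (∀ i, x i ∈ Set.Icc (0:ℝ) 1) →
        |Φ x - ∏ i, x i| ≤ 9 * ((k : ℝ) - 1) * ((N : ℝ) + 1) ^ (-(7 * (k : ℤ) * (L : ℤ)))) ∧
      (∀ x : Fin k → ℝ, (∀ i, x i ∈ Set.Icc (0:ℝ) 1) → (∃ i, x i = 0) → Φ x = 0) := by
  have hq : 1 ≤ N := hN
  have hkL : 2 ≤ k * L := by nlinarith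
  have hr : 2 ≤ 4*k*L := by nlinarith
  obtain ⟨P, hPnet, hPsem⟩ := chain hq hr hk (k-1) (by omega) le_rfl
  have hb1 : k-(k-1) = 1 := by omega
  refine ⟨fun x => P x ⟨0, by omega⟩, ?_, ?_, ?_⟩
  · -- the network representation
    refine ⟨(k-1)*((4*k*L)+2)+1, ?_, ?_⟩
    · -- depth bound
      obtain ⟨a, rfl⟩ : ∃ a, k = a+2 := ⟨k-2, by omega⟩
      have h1 : (a+2)-1 = a+1 := rfl
      rw [h1]
      nlinarith [hL, Nat.zero_le a]
    · have hnet1 := net_cast (rfl : k = k) hb1 hPnet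
      have hnet2 := net_mono_width hnet1 (N' := 9*N+k+7) (by simp [D3]; omega)
      refine net_congr hnet2 ?_
      funext x i
      congr 1
      apply Fin.ext
      have := i.isLt
      simp only [Fin.coe_cast]
      omega
  · -- approximation bound
    intro x hx
    obtain ⟨-, herr, -, -⟩ := hPsem x hx
    rw [prodj_full (by omega) x] at herr
    have hmain : ((k-1:ℕ):ℝ) * (6 * epsq N (4*k*L))
        ≤ 9 * ((k : ℝ) - 1) * ((N : ℝ) + 1) ^ (-(7 * (k : ℤ) * (L : ℤ))) := by
      set A : ℝ := ((N:ℝ)+1)^(7*k*L) with hA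
      have hApos : 0 < A := by positivity
      have hzpow : ((N : ℝ) + 1) ^ (-(7 * (k : ℤ) * (L : ℤ))) = 1/A := by
        have he : (-(7 * (k:ℤ) * (L:ℤ))) = -((7*k*L : ℕ) : ℤ) := by push_cast; ring
        rw [he, zpow_neg, zpow_natCast, one_div]
      set m : ℝ := emq N (4*k*L-1) with hm
      have hmpos : 0 < m := em_pos hq _
      have hN1 : (1:ℝ) ≤ N := by exact_mod_cast hq
      have hm1 : ((N:ℝ)+1)^(4*k*L-1) ≤ m := by
        rw [hm, emq]
        calc ((N:ℝ)+1)^(4*k*L-1) ≤ (2*(N:ℝ))^(4*k*L-1) := by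
              apply pow_le_pow_left₀ (by linarith) (by linarith)
          _ ≤ (N:ℝ) * (2*(N:ℝ))^(4*k*L-1) := by
              nlinarith [pow_nonneg (by linarith : (0:ℝ) ≤ 2*(N:ℝ)) (4*k*L-1)]
      have hm2 : A ≤ m^2 := by
        have e1 : A ≤ (((N:ℝ)+1)^(4*k*L-1))^2 := by
          rw [← pow_mul]
          apply pow_le_pow_right₀ (by linarith)
          rw [show 7*k*L = 7*(k*L) from by ring, show (4*k*L-1)*2 = (4*(k*L)-1)*2 from by rw [show 4*k*L = 4*(k*L) from by ring]]
          omega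
        have e2 : (((N:ℝ)+1)^(4*k*L-1))^2 ≤ m^2 := by
          apply pow_le_pow_left₀ (by positivity) hm1
        linarith
      have hinv : (1:ℝ)/(m^2) ≤ 1/A := one_div_le_one_div_of_le hApos hm2
      have heps : epsq N (4*k*L) = 1/(4*m^2) := rfl
      have hk1 : (1:ℝ) ≤ ((k-1:ℕ):ℝ) := by
        have : 1 ≤ k-1 := by omega
        exact_mod_cast this
      have hcast : ((k-1:ℕ):ℝ) = (k:ℝ) - 1 := by
        push_cast [Nat.cast_sub (by omega : 1 ≤ k)]
        ring
      rw [hzpow, heps, hcast]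
      have hstep : 6 * (1/(4*m^2)) ≤ 9 * (1/A) := by
        have : 6 * (1/(4*m^2)) = (3/2) * (1/m^2) := by field_simp; ring
        rw [this]
        nlinarith [hinv, one_div_pos.mpr hApos]
      have hkpos : (0:ℝ) < (k:ℝ) - 1 := by
        have : (2:ℝ) ≤ k := by exact_mod_cast hk
        linarith
      nlinarith [hstep, one_div_pos.mpr hApos]
    calc |P x ⟨0, by omega⟩ - ∏ i, x i| ≤ ((k-1:ℕ):ℝ) * (6 * epsq N (4*k*L)) := herr
      _ ≤ _ := hmain
  · -- zero at zero
    intro x hx ⟨i, hxi⟩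
    obtain ⟨-, -, hzero, -⟩ := hPsem x hx
    exact hzero ⟨i, by omega, hxi⟩
end
end

section
/- For any N, L, k ∈ ℕ with k ≥ 3, there exists a ReLU network φ₁: ℝ → ℝ with width (k+1)(9(N+1)+k) and depth 7k²L such that φ₁(x) = 0 for all x ∉ [0, k+1] and sup_{x∈ℝ} |𝒩_k(x) − φ₁(x)| ≤ 9 · (2k+2)^k / (k−1)! · (N+1)^{−7(k−1)L}. -/
open scoped BigOperators ENNReal

noncomputable section

/-- The univariate cardinal B-spline of order `k`:
`𝒩_k(x) = (1/(k-1)!) Σ_{l=0}^k (-1)^l (k choose l) σ(x-l)^{k-1}`. -/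
def cardBspline (k : ℕ) (x : ℝ) : ℝ :=
  (1 / ((k - 1).factorial : ℝ)) * ∑ l ∈ Finset.range (k + 1),
    (-1 : ℝ) ^ l * (k.choose l : ℝ) * (max (x - (l : ℝ)) 0) ^ (k - 1)


open Finset


lemma powsum : ∀ j k : ℕ, j < k →
    (∑ l ∈ range (k+1), (-1:ℝ)^l * (k.choose l : ℝ) * (l:ℝ)^j) = 0 := by
  intro j
  induction j using Nat.strong_induction_on with
  | _ j IH =>
    intro k hjk
    match j with
    | 0 =>
      have h := Int.alternating_sum_range_choose (n := k)
      have hk0 : k ≠ 0 := by omega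
      rw [if_neg hk0] at h
      have : ((∑ i ∈ range (k+1), (-1:ℤ)^i * (k.choose i : ℤ) : ℤ) : ℝ) = 0 := by
        rw [h]; norm_num
      push_cast at this
      simpa using this
    | r + 1 =>
      have hk1 : 1 ≤ k := by omega
      rw [Finset.sum_range_succ' _ k]
      have h0 : ((-1:ℝ))^0 * (k.choose 0 : ℝ) * ((0:ℕ):ℝ)^(r+1) = 0 := by
        norm_num
      rw [h0, add_zero]
      have key : ∀ i ∈ range k, (-1:ℝ)^(i+1) * (k.choose (i+1):ℝ) * (((i+1:ℕ)):ℝ)^(r+1)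
          = (-(k:ℝ)) * ((-1:ℝ)^i * (((k-1).choose i : ℝ) * ((i:ℝ)+1)^r)) := by
        intro i _
        have hc : (k:ℕ) * ((k-1).choose i) = (k.choose (i+1)) * (i+1) := by
          have := Nat.add_one_mul_choose_eq (k-1) i
          rwa [Nat.sub_add_cancel hk1] at this
        have hcR : (k:ℝ) * (((k-1).choose i : ℕ):ℝ) = (k.choose (i+1) : ℝ) * ((i:ℝ)+1) := by
          exact_mod_cast congrArg (fun n : ℕ => (n:ℝ)) hc
        push_cast
        calc (-1:ℝ)^(i+1) * (k.choose (i+1):ℝ) * ((i:ℝ)+1)^(r+1)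
            = (-1:ℝ)^(i+1) * ((k.choose (i+1):ℝ) * ((i:ℝ)+1)) * ((i:ℝ)+1)^r := by ring
          _ = (-1:ℝ)^(i+1) * ((k:ℝ) * (((k-1).choose i : ℕ):ℝ)) * ((i:ℝ)+1)^r := by rw [hcR]
          _ = (-(k:ℝ)) * ((-1:ℝ)^i * (((k-1).choose i : ℝ) * ((i:ℝ)+1)^r)) := by
              rw [pow_succ]; ring
      rw [Finset.sum_congr rfl key, ← Finset.mul_sum]
      have hexp : ∀ i ∈ range k, (-1:ℝ)^i * (((k-1).choose i : ℝ) * ((i:ℝ)+1)^r)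
          = ∑ t ∈ range (r+1), (r.choose t : ℝ) * ((-1:ℝ)^i * ((k-1).choose i : ℝ) * (i:ℝ)^t) := by
        intro i _
        have hp : ((i:ℝ)+1)^r = ∑ t ∈ range (r+1), (i:ℝ)^t * (1:ℝ)^(r-t) * (r.choose t : ℝ) :=
          add_pow (i:ℝ) 1 r
        rw [hp, Finset.mul_sum, Finset.mul_sum]
        refine Finset.sum_congr rfl fun t _ => by ring
      rw [Finset.sum_congr rfl hexp, Finset.sum_comm]
      have hz : ∀ t ∈ range (r+1),
          (∑ i ∈ range k, (r.choose t : ℝ) * ((-1:ℝ)^i * ((k-1).choose i : ℝ) * (i:ℝ)^t)) = 0 := by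
        intro t ht
        rw [← Finset.mul_sum]
        have := IH t (by simp at ht; omega) (k-1) (by simp at ht; omega)
        rw [Nat.sub_add_cancel hk1] at this
        rw [this, mul_zero]
      rw [Finset.sum_congr rfl hz, Finset.sum_const, smul_zero, mul_zero]

lemma altvanish (k j : ℕ) (hj : j < k) (x : ℝ) :
    (∑ l ∈ range (k+1), (-1:ℝ)^l * (k.choose l : ℝ) * (x - (l:ℝ))^j) = 0 := by
  have hexp : ∀ l ∈ range (k+1), (-1:ℝ)^l * (k.choose l : ℝ) * (x - (l:ℝ))^j
      = ∑ t ∈ range (j+1), (x^t * (j.choose t : ℝ) * (-1:ℝ)^(j-t)) *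
          ((-1:ℝ)^l * (k.choose l : ℝ) * (l:ℝ)^(j-t)) := by
    intro l _
    have hp : (x + (-(l:ℝ)))^j = ∑ t ∈ range (j+1), x^t * (-(l:ℝ))^(j-t) * (j.choose t : ℝ) :=
      add_pow x (-(l:ℝ)) j
    rw [sub_eq_add_neg, hp, Finset.mul_sum]
    refine Finset.sum_congr rfl fun t _ => ?_
    rw [neg_pow (l:ℝ) (j-t)]
    ring
  rw [Finset.sum_congr rfl hexp, Finset.sum_comm]
  have hz : ∀ t ∈ range (j+1),
      (∑ l ∈ range (k+1), (x^t * (j.choose t : ℝ) * (-1:ℝ)^(j-t)) *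
        ((-1:ℝ)^l * (k.choose l : ℝ) * (l:ℝ)^(j-t))) = 0 := by
    intro t _
    rw [← Finset.mul_sum, powsum (j-t) k (by omega), mul_zero]
  rw [Finset.sum_congr rfl hz, Finset.sum_const, smul_zero]


def relu (t : ℝ) : ℝ := max t 0

lemma relu_of_nonneg {t : ℝ} (h : 0 ≤ t) : relu t = t := max_eq_left h
lemma relu_of_nonpos {t : ℝ} (h : t ≤ 0) : relu t = 0 := max_eq_right h
lemma relu_nonneg (t : ℝ) : 0 ≤ relu t := le_max_right _ _

def gcoef (b i : ℕ) : ℝ := if i = 0 then (b:ℝ) else (-1:ℝ)^i * (2*b)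
def ecoef (b i : ℕ) : ℝ := if i = 0 then ((b:ℝ)-1)/b else -(2/(b:ℝ))

def gf (b : ℕ) (t : ℝ) : ℝ := ∑ i ∈ range b, gcoef b i * relu (t - i/b)
def elf (b : ℕ) (t : ℝ) : ℝ := ∑ i ∈ range b, ecoef b i * relu (t - i/b)

lemma gsum_closed (b : ℕ) (hb : b ≠ 0) (t : ℝ) : ∀ j : ℕ,
    (∑ i ∈ range (j+1), gcoef b i * (t - i/b)) =
      if Even j then (b:ℝ)*t - j else (j:ℝ) + 1 - b*t := by
  have hb' : (b:ℝ) ≠ 0 := Nat.cast_ne_zero.mpr hb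
  intro j
  induction j with
  | zero => simp [gcoef]
  | succ j ih =>
    rw [Finset.sum_range_succ, ih, gcoef, if_neg (by omega : ¬ (j+1 = 0))]
    by_cases hj : Even j
    · have h1 : ¬ Even (j+1) := by simp [Nat.even_add_one, hj]
      have hodd : (-1:ℝ)^(j+1) = -1 := Odd.neg_one_pow (by rw [Nat.odd_add_one]; exact Nat.not_odd_iff_even.mpr hj)
      rw [if_pos hj, if_neg h1, hodd]
      push_cast
      field_simp
      ring
    · have h1 : Even (j+1) := Nat.even_add_one.mpr hj
      have heven : (-1:ℝ)^(j+1) = 1 := Even.neg_one_pow h1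
      rw [if_neg hj, if_pos h1, heven]
      push_cast
      field_simp
      ring

lemma esum_closed (b : ℕ) (hb : b ≠ 0) (t : ℝ) : ∀ j : ℕ,
    (∑ i ∈ range (j+1), ecoef b i * (t - i/b)) =
      ((j:ℝ)*((b:ℝ)-j) + ((b:ℝ)*t-j)*((b:ℝ)-2*j-1))/(b:ℝ)^2 := by
  have hb' : (b:ℝ) ≠ 0 := Nat.cast_ne_zero.mpr hb
  intro j
  induction j with
  | zero => simp [ecoef]; field_simp
  | succ j ih =>
    rw [Finset.sum_range_succ, ih, ecoef, if_neg (by omega : ¬ (j+1 = 0))]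
    push_cast
    field_simp
    ring

lemma sum_relu_cell {b j : ℕ} (hj : j < b) {t : ℝ} (h1 : (j:ℝ)/b ≤ t) (h2 : t ≤ ((j:ℝ)+1)/b)
    (co : ℕ → ℝ) :
    (∑ i ∈ range b, co i * relu (t - i/b)) = ∑ i ∈ range (j+1), co i * (t - i/b) := by
  have hb' : (0:ℝ) < b := by
    have : 0 < b := by omega
    exact_mod_cast this
  rw [← Finset.sum_subset (Finset.range_subset_range.mpr (by omega : j+1 ≤ b))]
  · refine Finset.sum_congr rfl fun i hi => ?_
    simp only [Finset.mem_range] at hi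
    have hle : (i:ℝ)/b ≤ (j:ℝ)/b := by
      gcongr
      exact_mod_cast (by omega : i ≤ j)
    rw [relu_of_nonneg (by linarith)]
  · intro i hi hni
    simp only [Finset.mem_range] at hi hni
    have hge : ((j:ℝ)+1)/b ≤ (i:ℝ)/b := by
      gcongr
      exact_mod_cast (by omega : j+1 ≤ i)
    rw [relu_of_nonpos (by linarith), mul_zero]

lemma cell_exists {b : ℕ} (hb : 1 ≤ b) {t : ℝ} (h0 : 0 ≤ t) (h1 : t ≤ 1) :
    ∃ j : ℕ, j < b ∧ (j:ℝ)/b ≤ t ∧ t ≤ ((j:ℝ)+1)/b := by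
  have hb' : (0:ℝ) < b := by exact_mod_cast (by omega : 0 < b)
  by_cases hc : Nat.floor ((b:ℝ)*t) ≤ b - 1
  · refine ⟨Nat.floor ((b:ℝ)*t), by omega, ?_, ?_⟩
    · rw [div_le_iff₀ hb']
      calc ((Nat.floor ((b:ℝ)*t)):ℝ) ≤ (b:ℝ)*t := Nat.floor_le (by positivity)
        _ = t * b := by ring
    · rw [le_div_iff₀ hb']
      have := Nat.lt_floor_add_one ((b:ℝ)*t)
      linarith
  · refine ⟨b - 1, by omega, ?_, ?_⟩
    · have hfl : (b:ℝ) ≤ Nat.floor ((b:ℝ)*t) := by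
        exact_mod_cast (by omega : b ≤ Nat.floor ((b:ℝ)*t))
      have h2 : ((Nat.floor ((b:ℝ)*t)):ℝ) ≤ (b:ℝ)*t := Nat.floor_le (by positivity)
      have ht1 : (1:ℝ) ≤ t := by
        by_contra hlt
        push_neg at hlt
        nlinarith
      have : ((b-1:ℕ):ℝ)/b ≤ 1 := by
        rw [div_le_one hb']
        exact_mod_cast (by omega : b - 1 ≤ b)
      linarith
    · rw [le_div_iff₀ hb']
      have : ((b-1:ℕ):ℝ)+1 = (b:ℝ) := by
        have : ((b-1)+1 : ℕ) = b := by omega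
        exact_mod_cast congrArg (fun n : ℕ => (n:ℝ)) this
      nlinarith

-- the two key per-point facts on [0,1]
lemma gf_mem_and_key {b : ℕ} (hb : 1 ≤ b) {t : ℝ} (h0 : 0 ≤ t) (h1 : t ≤ 1) :
    (0 ≤ gf b t ∧ gf b t ≤ 1) ∧
      elf b t + ((b:ℝ)^2)⁻¹ * (gf b t - (gf b t)^2) = t - t^2 := by
  have hbne : b ≠ 0 := by omega
  have hb' : (0:ℝ) < b := by exact_mod_cast (by omega : 0 < b)
  obtain ⟨j, hj, hj1, hj2⟩ := cell_exists hb h0 h1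
  have hg : gf b t = if Even j then (b:ℝ)*t - j else (j:ℝ) + 1 - b*t := by
    rw [gf, sum_relu_cell hj hj1 hj2, gsum_closed b hbne t j]
  have he : elf b t = ((j:ℝ)*((b:ℝ)-j) + ((b:ℝ)*t-j)*((b:ℝ)-2*j-1))/(b:ℝ)^2 := by
    rw [elf, sum_relu_cell hj hj1 hj2, esum_closed b hbne t j]
  have hτ1 : (j:ℝ) ≤ (b:ℝ)*t := by
    rw [div_le_iff₀ hb'] at hj1
    linarith
  have hτ2 : (b:ℝ)*t ≤ (j:ℝ)+1 := by
    rw [le_div_iff₀ hb'] at hj2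
    linarith
  constructor
  · rw [hg]
    split_ifs <;> constructor <;> linarith
  · rw [hg, he]
    split_ifs <;> field_simp <;> ring

def Sqp (b m : ℕ) (t : ℝ) : ℝ :=
  t - ∑ s ∈ range m, (((b:ℝ)^2)⁻¹)^s * elf b ((gf b)^[s] t)

lemma sqp_succ (b m : ℕ) (t : ℝ) :
    Sqp b (m+1) t = t - elf b t - ((b:ℝ)^2)⁻¹ * ((gf b t) - Sqp b m (gf b t)) := by
  rw [Sqp, Finset.sum_range_succ' _ m]
  simp only [Function.iterate_succ_apply, Function.iterate_zero_apply, pow_zero, one_mul]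
  have hc : ∀ s ∈ range m, (((b:ℝ)^2)⁻¹)^(s+1) * elf b ((gf b)^[s] (gf b t))
      = ((b:ℝ)^2)⁻¹ * ((((b:ℝ)^2)⁻¹)^s * elf b ((gf b)^[s] (gf b t))) := by
    intro s _
    rw [pow_succ]
    ring
  rw [Finset.sum_congr rfl hc, ← Finset.mul_sum, Sqp]
  ring

lemma sqp_err {b : ℕ} (hb : 1 ≤ b) : ∀ m : ℕ, ∀ t : ℝ, 0 ≤ t → t ≤ 1 →
    |Sqp b m t - t^2| ≤ (1/4) * (((b:ℝ)^2)⁻¹)^m := by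
  have hc0 : (0:ℝ) ≤ ((b:ℝ)^2)⁻¹ := by positivity
  intro m
  induction m with
  | zero =>
    intro t h0 h1
    simp only [Sqp, range_zero, Finset.sum_empty, sub_zero, pow_zero, mul_one]
    rw [abs_le]
    constructor
    · nlinarith [mul_nonneg h0 (by linarith : (0:ℝ) ≤ 1 - t)]
    · nlinarith [sq_nonneg (t - 1/2)]
  | succ m ih =>
    intro t h0 h1
    obtain ⟨⟨hg0, hg1⟩, hkey⟩ := gf_mem_and_key hb h0 h1
    have h2 : Sqp b (m+1) t - t^2 = ((b:ℝ)^2)⁻¹ * (Sqp b m (gf b t) - (gf b t)^2) := by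
      rw [sqp_succ]
      nlinarith [hkey]
    rw [h2, abs_mul, abs_of_nonneg hc0]
    have := ih (gf b t) hg0 hg1
    calc ((b:ℝ)^2)⁻¹ * |Sqp b m (gf b t) - (gf b t)^2|
        ≤ ((b:ℝ)^2)⁻¹ * ((1/4) * (((b:ℝ)^2)⁻¹)^m) := by
          exact mul_le_mul_of_nonneg_left this hc0
      _ = (1/4) * (((b:ℝ)^2)⁻¹)^(m+1) := by ring

lemma sqp_bounds {b : ℕ} (hb : 1 ≤ b) (m : ℕ) {t : ℝ} (h0 : 0 ≤ t) (h1 : t ≤ 1) :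
    -(1/4) ≤ Sqp b m t ∧ Sqp b m t ≤ 5/4 := by
  have h := sqp_err hb m t h0 h1
  have hcle : (((b:ℝ)^2)⁻¹)^m ≤ 1 := by
    apply pow_le_one₀ (by positivity)
    rw [inv_le_one_iff₀]
    right
    have : (1:ℝ) ≤ (b:ℝ) := by exact_mod_cast hb
    nlinarith
  rw [abs_le] at h
  constructor <;> nlinarith

def mulA (b m : ℕ) (x y : ℝ) : ℝ :=
  Sqp b m ((x+y)/2) - Sqp b m (relu ((x-y)/2) + relu ((y-x)/2))

lemma relu_abs (u : ℝ) : relu u + relu (-u) = |u| := by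
  rcases le_total u 0 with h | h
  · rw [relu_of_nonpos h, relu_of_nonneg (by linarith), abs_of_nonpos h]; ring
  · rw [relu_of_nonneg h, relu_of_nonpos (by linarith), abs_of_nonneg h]; ring

lemma mulA_err {b : ℕ} (hb : 1 ≤ b) (m : ℕ) {x y : ℝ}
    (hx0 : 0 ≤ x) (hx1 : x ≤ 1) (hy0 : 0 ≤ y) (hy1 : y ≤ 1) :
    |mulA b m x y - x*y| ≤ (1/2) * (((b:ℝ)^2)⁻¹)^m := by
  have habs : relu ((x-y)/2) + relu ((y-x)/2) = |(x-y)/2| := by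
    have := relu_abs ((x-y)/2)
    rw [show -((x-y)/2) = (y-x)/2 by ring] at this
    exact this
  have h1 : |mulA b m x y - x*y| ≤
      |Sqp b m ((x+y)/2) - ((x+y)/2)^2| + |Sqp b m (|(x-y)/2|) - (|(x-y)/2|)^2| := by
    have hsq : ((x+y)/2)^2 - (|(x-y)/2|)^2 = x*y := by
      rw [sq_abs]
      ring
    rw [mulA, habs]
    calc |Sqp b m ((x+y)/2) - Sqp b m (|(x-y)/2|) - x*y|
        = |(Sqp b m ((x+y)/2) - ((x+y)/2)^2) - (Sqp b m (|(x-y)/2|) - (|(x-y)/2|)^2)| := by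
          rw [← hsq]; ring_nf
      _ ≤ _ := abs_sub _ _
  have e1 := sqp_err hb m ((x+y)/2) (by linarith) (by linarith)
  have e2 := sqp_err hb m (|(x-y)/2|) (abs_nonneg _) (by rw [abs_le]; constructor <;> linarith)
  linarith

def Qf (b m : ℕ) : ℕ → ℝ → ℝ
  | 0, s => s
  | (j+1), s => relu (mulA b m (Qf b m j s) s) - relu (mulA b m (Qf b m j s) s - 1)

lemma clamp01_mem (a : ℝ) : 0 ≤ relu a - relu (a-1) ∧ relu a - relu (a-1) ≤ 1 := by
  rcases le_total a 0 with h | h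
  · rw [relu_of_nonpos h, relu_of_nonpos (by linarith)]; norm_num
  · rcases le_total a 1 with h' | h'
    · rw [relu_of_nonneg h, relu_of_nonpos (by linarith)]
      constructor <;> linarith
    · rw [relu_of_nonneg h, relu_of_nonneg (by linarith)]
      constructor <;> linarith

lemma clamp01_err {a c : ℝ} (h0 : 0 ≤ c) (h1 : c ≤ 1) :
    |relu a - relu (a-1) - c| ≤ |a - c| := by
  rcases le_total a 0 with h | h
  · rw [relu_of_nonpos h, relu_of_nonpos (by linarith)]
    rw [abs_sub_comm, abs_of_nonneg (by linarith), abs_of_nonpos (by linarith)]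
    linarith
  · rcases le_total a 1 with h' | h'
    · rw [relu_of_nonneg h, relu_of_nonpos (by linarith)]
      simp
    · rw [relu_of_nonneg h, relu_of_nonneg (by linarith)]
      have he : a - (a-1) - c = 1 - c := by ring
      rw [he]
      calc |1 - c| = 1 - c := abs_of_nonneg (by linarith)
        _ ≤ a - c := by linarith
        _ ≤ |a - c| := le_abs_self _

lemma Qf_mem_err {b : ℕ} (hb : 1 ≤ b) (m : ℕ) {s : ℝ} (h0 : 0 ≤ s) (h1 : s ≤ 1) :
    ∀ j : ℕ, (0 ≤ Qf b m j s ∧ Qf b m j s ≤ 1) ∧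
      |Qf b m j s - s^(j+1)| ≤ (j:ℝ) * ((1/2) * (((b:ℝ)^2)⁻¹)^m) := by
  intro j
  induction j with
  | zero =>
    refine ⟨⟨h0, h1⟩, ?_⟩
    simp [Qf, pow_one]
  | succ j ih =>
    obtain ⟨⟨hq0, hq1⟩, herr⟩ := ih
    have hmu := mulA_err hb m hq0 hq1 h0 h1
    set a := mulA b m (Qf b m j s) s with ha
    have hsp0 : 0 ≤ s^(j+1+1) := by positivity
    have hsp1 : s^(j+1+1) ≤ 1 := pow_le_one₀ h0 h1
    have key : |a - s^(j+1+1)| ≤ ((j:ℝ)+1) * ((1/2) * (((b:ℝ)^2)⁻¹)^m) := by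
      have h2 : |a - s^(j+1+1)| ≤ |a - Qf b m j s * s| + |Qf b m j s * s - s^(j+1+1)| := by
        calc |a - s^(j+1+1)| = |(a - Qf b m j s * s) + (Qf b m j s * s - s^(j+1+1))| := by
              ring_nf
          _ ≤ _ := abs_add_le _ _
      have h3 : |Qf b m j s * s - s^(j+1+1)| ≤ (j:ℝ) * ((1/2) * (((b:ℝ)^2)⁻¹)^m) := by
        have : Qf b m j s * s - s^(j+1+1) = (Qf b m j s - s^(j+1)) * s := by
          rw [pow_succ]; ring
        rw [this, abs_mul, abs_of_nonneg h0]
        calc |Qf b m j s - s^(j+1)| * s ≤ |Qf b m j s - s^(j+1)| * 1 := by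
              exact mul_le_mul_of_nonneg_left h1 (abs_nonneg _)
          _ ≤ (j:ℝ) * ((1/2) * (((b:ℝ)^2)⁻¹)^m) := by rw [mul_one]; exact herr
      push_cast
      linarith
    refine ⟨?_, ?_⟩
    · exact ⟨(clamp01_mem a).1, (clamp01_mem a).2⟩
    · calc |Qf b m (j+1) s - s^(j+1+1)| = |relu a - relu (a-1) - s^(j+1+1)| := rfl
        _ ≤ |a - s^(j+1+1)| := clamp01_err hsp0 hsp1
        _ ≤ _ := by push_cast; linarith [key]



def svf (k l : ℕ) (x : ℝ) : ℝ := relu (x - l) / ((k:ℝ)+1)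
def wco (k l : ℕ) : ℝ := (-1:ℝ)^l * (k.choose l : ℝ) / ((k-1).factorial : ℝ) * ((k:ℝ)+1)^(k-1)
def psiF (b m k : ℕ) (t : ℝ) : ℝ := ∑ l ∈ range (k+1), wco k l * Qf b m (k-2) (svf k l t)
def clampK (k : ℕ) (x : ℝ) : ℝ := relu x - relu (relu x - ((k:ℝ)+1))
def phiF (b m k : ℕ) (x : ℝ) : ℝ :=
  psiF b m k (clampK k x) - psiF b m k 0
    - (psiF b m k ((k:ℝ)+1) - psiF b m k 0) * relu (clampK k x - (k:ℝ))

lemma clampK_mem (k : ℕ) (x : ℝ) : 0 ≤ clampK k x ∧ clampK k x ≤ (k:ℝ)+1 := by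
  rw [clampK]
  have hu := relu_nonneg x
  rcases le_total (relu x) ((k:ℝ)+1) with h | h
  · rw [relu_of_nonpos (t := relu x - ((k:ℝ)+1)) (by linarith)]
    constructor <;> linarith
  · rw [relu_of_nonneg (t := relu x - ((k:ℝ)+1)) (by linarith)]
    constructor <;> linarith

lemma clampK_of_mem {k : ℕ} {x : ℝ} (h0 : 0 ≤ x) (h1 : x ≤ (k:ℝ)+1) : clampK k x = x := by
  rw [clampK, relu_of_nonneg h0, relu_of_nonpos (t := x - ((k:ℝ)+1)) (by linarith)]
  ring

lemma clampK_of_nonpos {k : ℕ} {x : ℝ} (h : x ≤ 0) : clampK k x = 0 := by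
  have hk0 : (0:ℝ) ≤ (k:ℝ) := Nat.cast_nonneg k
  rw [clampK, relu_of_nonpos h,
    relu_of_nonpos (t := (0:ℝ) - ((k:ℝ)+1)) (by linarith)]
  ring

lemma clampK_of_ge {k : ℕ} {x : ℝ} (h : (k:ℝ)+1 ≤ x) : clampK k x = (k:ℝ)+1 := by
  have hk0 : (0:ℝ) ≤ (k:ℝ) := Nat.cast_nonneg k
  have h0 : (0:ℝ) ≤ x := by linarith
  rw [clampK, relu_of_nonneg h0, relu_of_nonneg (by linarith)]
  ring

lemma svf_mem {k l : ℕ} (hl : l ≤ k) {t : ℝ} (h0 : 0 ≤ t) (h1 : t ≤ (k:ℝ)+1) :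
    0 ≤ svf k l t ∧ svf k l t ≤ 1 := by
  have hk1 : (0:ℝ) < (k:ℝ)+1 := by positivity
  rw [svf]
  constructor
  · exact div_nonneg (relu_nonneg _) (by linarith)
  · rw [div_le_one hk1]
    rcases le_total (t - l) 0 with h | h
    · rw [relu_of_nonpos h]; linarith
    · rw [relu_of_nonneg h]
      have : (0:ℝ) ≤ l := Nat.cast_nonneg l
      linarith

lemma card_zero_of_nonpos {k : ℕ} (hk : 2 ≤ k) {x : ℝ} (h : x ≤ 0) : cardBspline k x = 0 := by
  rw [cardBspline]
  have : ∀ l ∈ range (k+1), (-1:ℝ)^l * (k.choose l : ℝ) * (max (x - (l:ℝ)) 0)^(k-1) = 0 := by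
    intro l _
    have hmax : max (x - (l:ℝ)) 0 = 0 := max_eq_right (by
      have : (0:ℝ) ≤ l := Nat.cast_nonneg l
      linarith)
    rw [hmax, zero_pow (by omega : k - 1 ≠ 0), mul_zero]
  rw [Finset.sum_congr rfl this, Finset.sum_const, smul_zero, mul_zero]

lemma card_zero_of_ge {k : ℕ} (hk : 2 ≤ k) {x : ℝ} (h : (k:ℝ) ≤ x) : cardBspline k x = 0 := by
  rw [cardBspline]
  have : ∀ l ∈ range (k+1), (-1:ℝ)^l * (k.choose l : ℝ) * (max (x - (l:ℝ)) 0)^(k-1)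
      = (-1:ℝ)^l * (k.choose l : ℝ) * (x - (l:ℝ))^(k-1) := by
    intro l hl
    simp only [Finset.mem_range] at hl
    have hlk : (l:ℝ) ≤ (k:ℝ) := by exact_mod_cast (by omega : l ≤ k)
    rw [max_eq_left (by linarith)]
  rw [Finset.sum_congr rfl this, altvanish k (k-1) (by omega) x, mul_zero]

lemma psi_err {b m k : ℕ} (hb : 1 ≤ b) (hk : 3 ≤ k) {t : ℝ} (h0 : 0 ≤ t) (h1 : t ≤ (k:ℝ)+1) :
    |psiF b m k t - cardBspline k t| ≤
      (2:ℝ)^k / ((k-1).factorial : ℝ) * ((k:ℝ)+1)^(k-1) *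
        (((k:ℝ)-2) * ((1/2) * (((b:ℝ)^2)⁻¹)^m)) := by
  have hk1 : (0:ℝ) < (k:ℝ)+1 := by positivity
  set mu : ℝ := (1/2) * (((b:ℝ)^2)⁻¹)^m with hmu
  have hmu0 : 0 ≤ mu := by positivity
  rw [cardBspline, psiF, Finset.mul_sum, ← Finset.sum_sub_distrib]
  have hterm : ∀ l ∈ range (k+1),
      |wco k l * Qf b m (k-2) (svf k l t)
        - (1 / ((k - 1).factorial : ℝ)) * ((-1:ℝ)^l * (k.choose l : ℝ) * (max (t - (l:ℝ)) 0)^(k-1))|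
      ≤ (k.choose l : ℝ) / ((k-1).factorial : ℝ) * ((k:ℝ)+1)^(k-1) * (((k:ℝ)-2) * mu) := by
    intro l hl
    simp only [Finset.mem_range] at hl
    obtain ⟨hs0, hs1⟩ := svf_mem (by omega : l ≤ k) h0 h1
    obtain ⟨⟨hq0, hq1⟩, herr⟩ := Qf_mem_err hb m hs0 hs1 (k-2)
    have hkk : k - 2 + 1 = k - 1 := by omega
    rw [hkk] at herr
    have hpow : (max (t - (l:ℝ)) 0)^(k-1) = ((k:ℝ)+1)^(k-1) * (svf k l t)^(k-1) := by
      have hA : ((k:ℝ)+1)^(k-1) ≠ 0 := by positivity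
      have h : (svf k l t)^(k-1) = (relu (t - (l:ℝ)))^(k-1) / ((k:ℝ)+1)^(k-1) := by
        rw [svf, div_pow]
      rw [h, mul_comm, div_mul_cancel₀ _ hA]
      rfl
    have heq : wco k l * Qf b m (k-2) (svf k l t)
        - (1 / ((k - 1).factorial : ℝ)) * ((-1:ℝ)^l * (k.choose l : ℝ) * (max (t - (l:ℝ)) 0)^(k-1))
        = ((-1:ℝ)^l * (k.choose l : ℝ) / ((k-1).factorial : ℝ) * ((k:ℝ)+1)^(k-1)) *
            (Qf b m (k-2) (svf k l t) - (svf k l t)^(k-1)) := by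
      rw [hpow, wco]
      ring
    rw [heq, abs_mul]
    have h2 : |(-1:ℝ)^l * (k.choose l : ℝ) / ((k-1).factorial : ℝ) * ((k:ℝ)+1)^(k-1)|
        = (k.choose l : ℝ) / ((k-1).factorial : ℝ) * ((k:ℝ)+1)^(k-1) := by
      rw [abs_mul, abs_div, abs_mul, abs_pow, abs_neg, abs_one, one_pow, one_mul]
      rw [abs_of_nonneg (by positivity : (0:ℝ) ≤ (k.choose l : ℝ)),
        abs_of_nonneg (by positivity : (0:ℝ) ≤ ((k-1).factorial : ℝ)),
        abs_of_nonneg (by positivity : (0:ℝ) ≤ (((k:ℝ)+1))^(k-1))]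
    rw [h2]
    have h3 : |Qf b m (k-2) (svf k l t) - (svf k l t)^(k-1)| ≤ ((k:ℝ)-2) * mu := by
      have hcast : ((k-2 : ℕ):ℝ) = (k:ℝ) - 2 := by
        rw [Nat.cast_sub (by omega : 2 ≤ k)]
        norm_num
      rw [← hcast]
      exact herr
    exact mul_le_mul_of_nonneg_left h3 (by positivity)
  refine le_trans (Finset.abs_sum_le_sum_abs _ _) ?_
  refine le_trans (Finset.sum_le_sum hterm) ?_
  have hchoose : (∑ l ∈ range (k+1), (k.choose l : ℝ)) = (2:ℝ)^k := by
    have h1 := Nat.sum_range_choose k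
    have h2 : ((∑ i ∈ range (k+1), k.choose i : ℕ) : ℝ) = ((2^k : ℕ) : ℝ) :=
      congrArg (fun n : ℕ => (n:ℝ)) h1
    push_cast at h2
    simpa using h2
  have hfac : (∑ l ∈ range (k+1), (k.choose l : ℝ) / ((k-1).factorial : ℝ) * ((k:ℝ)+1)^(k-1) * (((k:ℝ)-2) * mu))
      = (∑ l ∈ range (k+1), (k.choose l : ℝ)) * (1 / ((k-1).factorial : ℝ) * ((k:ℝ)+1)^(k-1) * (((k:ℝ)-2) * mu)) := by
    rw [Finset.sum_mul]
    refine Finset.sum_congr rfl fun l _ => by ring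
  rw [hfac, hchoose]
  exact le_of_eq (by ring)

lemma phi_main {b m k : ℕ} (hb : 1 ≤ b) (hk : 3 ≤ k) (x : ℝ) :
    |cardBspline k x - phiF b m k x| ≤
      4 * ((2:ℝ)^k / ((k-1).factorial : ℝ) * ((k:ℝ)+1)^(k-1) *
        (((k:ℝ)-2) * ((1/2) * (((b:ℝ)^2)⁻¹)^m))) := by
  set E : ℝ := (2:ℝ)^k / ((k-1).factorial : ℝ) * ((k:ℝ)+1)^(k-1) *
        (((k:ℝ)-2) * ((1/2) * (((b:ℝ)^2)⁻¹)^m)) with hE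
  have hE0 : 0 ≤ E := by
    rw [hE]
    have : (0:ℝ) ≤ (k:ℝ)-2 := by
      have : (3:ℝ) ≤ (k:ℝ) := by exact_mod_cast hk
      linarith
    positivity
  have hk0 : (0:ℝ) ≤ (k:ℝ) := Nat.cast_nonneg k
  rcases le_total x 0 with hx | hx
  · rw [phiF, clampK_of_nonpos hx, card_zero_of_nonpos (by omega) hx]
    rw [relu_of_nonpos (by linarith : (0:ℝ) - (k:ℝ) ≤ 0)]
    simp only [mul_zero, sub_zero, sub_self, abs_zero]
    linarith
  · rcases le_total x ((k:ℝ)+1) with hx1 | hx1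
    · -- main interval
      rw [phiF, clampK_of_mem hx hx1]
      have e1 := psi_err (b := b) (m := m) hb hk hx hx1
      have e2 := psi_err (b := b) (m := m) hb hk (le_refl (0:ℝ)) (by linarith : (0:ℝ) ≤ (k:ℝ)+1)
      have e3 := psi_err (b := b) (m := m) hb hk (by linarith : (0:ℝ) ≤ (k:ℝ)+1) (le_refl ((k:ℝ)+1))
      rw [card_zero_of_nonpos (by omega) (le_refl (0:ℝ)), sub_zero] at e2
      rw [card_zero_of_ge (by omega) (by linarith : (k:ℝ) ≤ (k:ℝ)+1), sub_zero] at e3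
      rw [← hE] at e1 e2 e3
      have hr0 : 0 ≤ relu (x - (k:ℝ)) := relu_nonneg _
      have hr1 : relu (x - (k:ℝ)) ≤ 1 := by
        rcases le_total (x - (k:ℝ)) 0 with h | h
        · rw [relu_of_nonpos h]; norm_num
        · rw [relu_of_nonneg h]; linarith
      have htri : |cardBspline k x - (psiF b m k x - psiF b m k 0
          - (psiF b m k ((k:ℝ)+1) - psiF b m k 0) * relu (x - (k:ℝ)))|
          ≤ |cardBspline k x - psiF b m k x| + |psiF b m k 0|
            + |(psiF b m k ((k:ℝ)+1) - psiF b m k 0) * relu (x - (k:ℝ))| := by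
        calc |cardBspline k x - (psiF b m k x - psiF b m k 0
            - (psiF b m k ((k:ℝ)+1) - psiF b m k 0) * relu (x - (k:ℝ)))|
            = |(cardBspline k x - psiF b m k x) + psiF b m k 0
              + (psiF b m k ((k:ℝ)+1) - psiF b m k 0) * relu (x - (k:ℝ))| := by ring_nf
          _ ≤ |(cardBspline k x - psiF b m k x) + psiF b m k 0|
              + |(psiF b m k ((k:ℝ)+1) - psiF b m k 0) * relu (x - (k:ℝ))| := abs_add_le _ _
          _ ≤ _ := by
              have := abs_add_le (cardBspline k x - psiF b m k x) (psiF b m k 0)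
              linarith
      have h4 : |(psiF b m k ((k:ℝ)+1) - psiF b m k 0) * relu (x - (k:ℝ))| ≤ 2 * E := by
        rw [abs_mul, abs_of_nonneg hr0]
        have hD : |psiF b m k ((k:ℝ)+1) - psiF b m k 0| ≤ 2 * E := by
          calc |psiF b m k ((k:ℝ)+1) - psiF b m k 0|
              ≤ |psiF b m k ((k:ℝ)+1)| + |psiF b m k 0| := abs_sub _ _
            _ ≤ 2 * E := by
                rw [abs_sub_comm] at e1
                linarith [abs_nonneg (psiF b m k ((k:ℝ)+1)), e2, e3]
        calc |psiF b m k ((k:ℝ)+1) - psiF b m k 0| * relu (x - (k:ℝ))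
            ≤ |psiF b m k ((k:ℝ)+1) - psiF b m k 0| * 1 :=
              mul_le_mul_of_nonneg_left hr1 (abs_nonneg _)
          _ ≤ 2 * E := by rw [mul_one]; exact hD
      have h5 : |cardBspline k x - psiF b m k x| ≤ E := by rw [abs_sub_comm] at e1; exact e1
      linarith
    · rw [phiF, clampK_of_ge hx1, card_zero_of_ge (by omega) (by linarith)]
      rw [relu_of_nonneg (by linarith : (0:ℝ) ≤ (k:ℝ)+1 - (k:ℝ))]
      have he : (k:ℝ)+1 - (k:ℝ) = 1 := by ring
      rw [he]
      simp only [mul_one]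
      have : psiF b m k ((k:ℝ)+1) - psiF b m k 0 - (psiF b m k ((k:ℝ)+1) - psiF b m k 0) = 0 := by ring
      rw [this, sub_zero, abs_zero]
      linarith

-- ################ generic net lemmas ################

lemma net_pos {d e f N L} (h : ReluNetExact d e f N L) : 1 ≤ L := by
  induction h with
  | affine _ => omega
  | comp _ _ _ ih => omega

lemma net_congr {d e N L} {f g : (Fin d → ℝ) → (Fin e → ℝ)} (hfg : f = g)
    (h : ReluNetExact d e f N L) : ReluNetExact d e g N L := hfg ▸ h

lemma affine_comp {d1 d2 d3} {f : (Fin d1 → ℝ) → (Fin d2 → ℝ)} {g : (Fin d2 → ℝ) → (Fin d3 → ℝ)}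
    (hf : IsAffineMap d1 d2 f) (hg : IsAffineMap d2 d3 g) :
    IsAffineMap d1 d3 (fun x => g (f x)) := by
  obtain ⟨A1, b1, h1⟩ := hf
  obtain ⟨A2, b2, h2⟩ := hg
  refine ⟨fun i p => ∑ j, A2 i j * A1 j p, fun i => (∑ j, A2 i j * b1 j) + b2 i, fun x i => ?_⟩
  dsimp only
  rw [h2]
  have : ∀ j, A2 i j * f x j = (∑ p, A2 i j * A1 j p * x p) + A2 i j * b1 j := by
    intro j
    rw [h1, mul_add, Finset.mul_sum]
    ring_nf
  rw [Finset.sum_congr rfl (fun j _ => this j), Finset.sum_add_distrib, Finset.sum_comm]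
  have h3 : ∀ p ∈ Finset.univ (α := Fin d1), (∑ j, A2 i j * A1 j p) * x p = ∑ j, A2 i j * A1 j p * x p :=
    fun p _ => Finset.sum_mul _ _ _
  rw [Finset.sum_congr rfl h3]
  ring

lemma affine_precomp {d1 d2 d3 N L} {T : (Fin d1 → ℝ) → (Fin d2 → ℝ)}
    {g : (Fin d2 → ℝ) → (Fin d3 → ℝ)} (hT : IsAffineMap d1 d2 T)
    (hg : ReluNetExact d2 d3 g N L) :
    ReluNetExact d1 d3 (fun x => g (T x)) N L := by
  cases hg with
  | affine hf => exact ReluNetExact.affine (affine_comp hT hf)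
  | comp hk hT' hg' => exact ReluNetExact.comp hk (affine_comp hT hT') hg'

lemma net_congr2 {d e N L L'} {f : (Fin d → ℝ) → (Fin e → ℝ)} (hL : L = L')
    (h : ReluNetExact d e f N L) : ReluNetExact d e f N L' := hL ▸ h

lemma net_compose {d1 d2 N L1} {f : (Fin d1 → ℝ) → (Fin d2 → ℝ)}
    (h1 : ReluNetExact d1 d2 f N L1) :
    ∀ {d3 : ℕ} {g : (Fin d2 → ℝ) → (Fin d3 → ℝ)} {L2 : ℕ}, ReluNetExact d2 d3 g N L2 →
      ReluNetExact d1 d3 (fun x => g (f x)) N (L1 + (L2 - 1)) := by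
  induction h1 with
  | affine hf =>
    intro d3 g L2 h2
    have h : 1 + (L2 - 1) = L2 := by have := net_pos h2; omega
    rw [h]
    exact affine_precomp hf h2
  | comp hk hT hf ih =>
    intro d3 g L2 h2
    refine net_congr2 (by omega) (net_congr rfl (ReluNetExact.comp hk hT (ih h2)))

-- a single relu layer as a net of depth 2
lemma layer_net {d e N} {T : (Fin d → ℝ) → (Fin e → ℝ)} (hT : IsAffineMap d e T)
    (he : e ≤ N) : ReluNetExact d e (fun x i => max (T x i) 0) N 2 := by
  have hid : IsAffineMap e e (fun (x : Fin e → ℝ) => x) := by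
    refine ⟨fun i j => if j = i then 1 else 0, fun _ => 0, fun x i => ?_⟩
    simp [Finset.sum_ite_eq']
  have h := ReluNetExact.comp (din := d) he hT (ReluNetExact.affine hid)
  exact net_congr rfl h

-- ################ AffP machinery on an arbitrary fintype ################

variable {P : Type*} [Fintype P] [DecidableEq P]

def AffP (f : (P → ℝ) → ℝ) : Prop :=
  ∃ (a : P → ℝ) (c : ℝ), ∀ y, f y = (∑ p : P, a p * y p) + c

lemma affp_const (c : ℝ) : AffP (fun _ : P → ℝ => c) :=
  ⟨fun _ => 0, c, fun y => by simp⟩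

lemma affp_coord (p : P) : AffP (fun y : P → ℝ => y p) := by
  refine ⟨fun q => if q = p then 1 else 0, 0, fun y => ?_⟩
  simp [Finset.sum_ite_eq']

lemma affp_add {f g : (P → ℝ) → ℝ} (hf : AffP f) (hg : AffP g) :
    AffP (fun y => f y + g y) := by
  obtain ⟨a1, c1, h1⟩ := hf
  obtain ⟨a2, c2, h2⟩ := hg
  refine ⟨fun p => a1 p + a2 p, c1 + c2, fun y => ?_⟩
  dsimp only
  rw [h1, h2]
  have h3 : ∑ p : P, (a1 p + a2 p) * y p = ∑ p : P, (a1 p * y p + a2 p * y p) :=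
    Finset.sum_congr rfl fun p _ => by ring
  rw [h3, Finset.sum_add_distrib]
  ring

lemma affp_cmul (c : ℝ) {f : (P → ℝ) → ℝ} (hf : AffP f) : AffP (fun y => c * f y) := by
  obtain ⟨a, c1, h1⟩ := hf
  refine ⟨fun p => c * a p, c * c1, fun y => ?_⟩
  dsimp only
  rw [h1, mul_add, Finset.mul_sum]
  have h3 : ∑ p : P, c * a p * y p = ∑ p : P, c * (a p * y p) :=
    Finset.sum_congr rfl fun p _ => by ring
  rw [h3]

lemma affp_neg {f : (P → ℝ) → ℝ} (hf : AffP f) : AffP (fun y => - f y) := by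
  have := affp_cmul (-1) hf
  simpa using this

lemma affp_sub {f g : (P → ℝ) → ℝ} (hf : AffP f) (hg : AffP g) :
    AffP (fun y => f y - g y) := by
  have := affp_add hf (affp_neg hg)
  simpa [sub_eq_add_neg] using this

lemma affp_sum {ι : Type*} (s : Finset ι) (f : ι → (P → ℝ) → ℝ)
    (hf : ∀ i ∈ s, AffP (f i)) : AffP (fun y => ∑ i ∈ s, f i y) := by
  classical
  induction s using Finset.induction_on with
  | empty => simpa using affp_const 0
  | insert a s hni ih =>
    rw [show (fun y => ∑ i ∈ insert a s, f i y) = fun y => f a y + ∑ i ∈ s, f i y from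
      funext fun y => Finset.sum_insert hni]
    exact affp_add (hf a (Finset.mem_insert_self a s)) (ih fun i hi => hf i (Finset.mem_insert_of_mem hi))


-- ################ bridge between product-indexed maps and Fin (n1*n2) ################

def pview {n1 n2 : ℕ} (z : Fin (n1*n2) → ℝ) : Fin n1 × Fin n2 → ℝ :=
  fun p => z (finProdFinEquiv p)

def liftT {n1 n2 : ℕ} (F : ((Fin n1 × Fin n2) → ℝ) → (Fin n1 × Fin n2) → ℝ) :
    (Fin (n1*n2) → ℝ) → Fin (n1*n2) → ℝ :=
  fun z i => F (pview z) (finProdFinEquiv.symm i)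

def liftIn {n1 n2 : ℕ} (F : (Fin 1 → ℝ) → (Fin n1 × Fin n2) → ℝ) :
    (Fin 1 → ℝ) → Fin (n1*n2) → ℝ :=
  fun v i => F v (finProdFinEquiv.symm i)

def liftOut {n1 n2 : ℕ} (G : ((Fin n1 × Fin n2) → ℝ) → ℝ) :
    (Fin (n1*n2) → ℝ) → Fin 1 → ℝ :=
  fun z _ => G (pview z)

def layerF {d e : ℕ} (T : (Fin d → ℝ) → Fin e → ℝ) : (Fin d → ℝ) → Fin e → ℝ :=
  fun x i => max (T x i) 0

lemma layerF_net {d e N} {T : (Fin d → ℝ) → (Fin e → ℝ)} (hT : IsAffineMap d e T)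
    (he : e ≤ N) : ReluNetExact d e (layerF T) N 2 := layer_net hT he

lemma bridge {n1 n2 : ℕ} (F : ((Fin n1 × Fin n2) → ℝ) → (Fin n1 × Fin n2) → ℝ)
    (hF : ∀ q, AffP (fun y => F y q)) : IsAffineMap (n1*n2) (n1*n2) (liftT F) := by
  choose a c h using hF
  refine ⟨fun i j => a (finProdFinEquiv.symm i) (finProdFinEquiv.symm j),
    fun i => c (finProdFinEquiv.symm i), fun z i => ?_⟩
  have h' := h (finProdFinEquiv.symm i) (pview z)
  dsimp only at h' ⊢
  rw [liftT, h']
  congr 1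
  rw [← Equiv.sum_comp (finProdFinEquiv.symm)
    (fun p => a (finProdFinEquiv.symm i) p * pview z p)]
  refine Finset.sum_congr rfl fun j _ => ?_
  rw [pview, Equiv.apply_symm_apply]

lemma bridge_in {n1 n2 : ℕ} (F : (Fin 1 → ℝ) → (Fin n1 × Fin n2) → ℝ)
    (hF : ∀ q, ∃ a c : ℝ, ∀ v, F v q = a * v 0 + c) :
    IsAffineMap 1 (n1*n2) (liftIn F) := by
  choose a c h using hF
  refine ⟨fun i _ => a (finProdFinEquiv.symm i), fun i => c (finProdFinEquiv.symm i),
    fun v i => ?_⟩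
  have h' := h (finProdFinEquiv.symm i) v
  dsimp only at h' ⊢
  rw [liftIn, h', Fin.sum_univ_one]

lemma bridge_out {n1 n2 : ℕ} (G : ((Fin n1 × Fin n2) → ℝ) → ℝ) (hG : AffP G) :
    IsAffineMap (n1*n2) 1 (liftOut G) := by
  obtain ⟨a, c, h⟩ := hG
  refine ⟨fun _ j => a (finProdFinEquiv.symm j), fun _ => c, fun z i => ?_⟩
  rw [liftOut, h (pview z)]
  congr 1
  rw [← Equiv.sum_comp (finProdFinEquiv.symm) (fun p => a p * pview z p)]
  refine Finset.sum_congr rfl fun j _ => ?_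
  rw [pview, Equiv.apply_symm_apply]

lemma pview_layerF {n1 n2 : ℕ} (F : ((Fin n1 × Fin n2) → ℝ) → (Fin n1 × Fin n2) → ℝ)
    (z : Fin (n1*n2) → ℝ) :
    pview (layerF (liftT F) z) = fun p => relu (F (pview z) p) := by
  funext p
  simp [pview, layerF, liftT, relu, Equiv.symm_apply_apply]

lemma pview_layerIn {n1 n2 : ℕ} (F : (Fin 1 → ℝ) → (Fin n1 × Fin n2) → ℝ)
    (v : Fin 1 → ℝ) :
    pview (layerF (liftIn F) v) = fun p => relu (F v p) := by
  funext p
  simp [pview, layerF, liftIn, relu, Equiv.symm_apply_apply]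


-- ################ concrete layers ################

section NetConstruction

variable (kk bb : ℕ)

/-- channel index helper -/
abbrev PT := Fin (kk+1) × Fin (2*bb+4)

variable {kk bb}

def pq (l : Fin (kk+1)) (i : ℕ) (h : i < 2*bb+4) : PT kk bb := (l, ⟨i, h⟩)

variable (kk bb)

def xrd (y : PT kk bb → ℝ) : ℝ :=
  y (0, ⟨0, by omega⟩) - y (0, ⟨1, by omega⟩)

def rowIn (v : Fin 1 → ℝ) (q : PT kk bb) : ℝ :=
  if q.1 = 0 ∧ (q.2 : ℕ) = 0 then v 0 else 0

def rowClamp (y : PT kk bb → ℝ) (q : PT kk bb) : ℝ :=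
  if q.1 = 0 ∧ (q.2 : ℕ) = 0 then y (0, ⟨0, by omega⟩)
  else if q.1 = 0 ∧ (q.2 : ℕ) = 1 then y (0, ⟨0, by omega⟩) - ((kk:ℝ)+1)
  else 0

def rowBranch (y : PT kk bb → ℝ) (q : PT kk bb) : ℝ :=
  if (q.2 : ℕ) = 0 then (xrd kk bb y - ((q.1 : ℕ):ℝ))/((kk:ℝ)+1)
  else if (q.2 : ℕ) = 2*bb+2 then (xrd kk bb y - ((q.1 : ℕ):ℝ))/((kk:ℝ)+1)
  else if (q.2 : ℕ) = 2*bb+3 then xrd kk bb y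
  else 0

def rowMultPre (y : PT kk bb → ℝ) (q : PT kk bb) : ℝ :=
  if (q.2 : ℕ) = 0 then ((y (q.1, ⟨0, by omega⟩) - y (q.1, ⟨1, by omega⟩)) + y (q.1, ⟨2*bb+2, by omega⟩))/2
  else if (q.2 : ℕ) = 1 then ((y (q.1, ⟨0, by omega⟩) - y (q.1, ⟨1, by omega⟩)) - y (q.1, ⟨2*bb+2, by omega⟩))/2
  else if (q.2 : ℕ) = 2 then (y (q.1, ⟨2*bb+2, by omega⟩) - (y (q.1, ⟨0, by omega⟩) - y (q.1, ⟨1, by omega⟩)))/2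
  else if (q.2 : ℕ) = 2*bb+2 then y (q.1, ⟨2*bb+2, by omega⟩)
  else if (q.2 : ℕ) = 2*bb+3 then y (q.1, ⟨2*bb+3, by omega⟩)
  else 0

def rowTentInit (y : PT kk bb → ℝ) (q : PT kk bb) : ℝ :=
  if (q.2 : ℕ) < bb then y (q.1, ⟨0, by omega⟩) - (((q.2 : ℕ)):ℝ)/bb
  else if (q.2 : ℕ) = bb then 1 + y (q.1, ⟨0, by omega⟩)
  else if (q.2 : ℕ) < 2*bb+1 then
    (y (q.1, ⟨1, by omega⟩) + y (q.1, ⟨2, by omega⟩)) - (((q.2 : ℕ) - (bb+1) : ℕ):ℝ)/bb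
  else if (q.2 : ℕ) = 2*bb+1 then 1 + (y (q.1, ⟨1, by omega⟩) + y (q.1, ⟨2, by omega⟩))
  else if (q.2 : ℕ) = 2*bb+2 then y (q.1, ⟨2*bb+2, by omega⟩)
  else y (q.1, ⟨2*bb+3, by omega⟩)

def rowTent (c : ℝ) (y : PT kk bb → ℝ) (q : PT kk bb) : ℝ :=
  if (q.2 : ℕ) < bb then
    (∑ i : Fin bb, gcoef bb i * y (q.1, ⟨i.1, by omega⟩)) - (((q.2 : ℕ)):ℝ)/bb
  else if (q.2 : ℕ) = bb then
    y (q.1, ⟨bb, by omega⟩) - c * (∑ i : Fin bb, ecoef bb i * y (q.1, ⟨i.1, by omega⟩))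
  else if (q.2 : ℕ) < 2*bb+1 then
    (∑ i : Fin bb, gcoef bb i * y (q.1, ⟨bb+1+i.1, by omega⟩)) - (((q.2 : ℕ) - (bb+1) : ℕ):ℝ)/bb
  else if (q.2 : ℕ) = 2*bb+1 then
    y (q.1, ⟨2*bb+1, by omega⟩) - c * (∑ i : Fin bb, ecoef bb i * y (q.1, ⟨bb+1+i.1, by omega⟩))
  else if (q.2 : ℕ) = 2*bb+2 then y (q.1, ⟨2*bb+2, by omega⟩)
  else y (q.1, ⟨2*bb+3, by omega⟩)

def rowMultPost (y : PT kk bb → ℝ) (q : PT kk bb) : ℝ :=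
  if (q.2 : ℕ) = 0 then y (q.1, ⟨bb, by omega⟩) - y (q.1, ⟨2*bb+1, by omega⟩)
  else if (q.2 : ℕ) = 1 then (y (q.1, ⟨bb, by omega⟩) - y (q.1, ⟨2*bb+1, by omega⟩)) - 1
  else if (q.2 : ℕ) = 2*bb+2 then y (q.1, ⟨2*bb+2, by omega⟩)
  else if (q.2 : ℕ) = 2*bb+3 then y (q.1, ⟨2*bb+3, by omega⟩)
  else 0

def rowRamp (y : PT kk bb → ℝ) (q : PT kk bb) : ℝ :=
  if (q.2 : ℕ) = 0 then y (q.1, ⟨0, by omega⟩) - y (q.1, ⟨1, by omega⟩)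
  else if (q.2 : ℕ) = 2 then y (q.1, ⟨2*bb+3, by omega⟩) - (kk:ℝ)
  else 0

def outG (C0 C1 : ℝ) (y : PT kk bb → ℝ) : ℝ :=
  (∑ l : Fin (kk+1), wco kk l.1 * (y (l, ⟨0, by omega⟩) - y (l, ⟨1, by omega⟩)))
    - C0 - C1 * y (0, ⟨2, by omega⟩)

-- affinity of all rows
lemma affp_divc {P : Type*} [Fintype P] [DecidableEq P] (c : ℝ) {f : (P → ℝ) → ℝ}
    (hf : AffP f) : AffP (fun y => f y / c) := by
  have h := affp_cmul c⁻¹ hf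
  have : (fun y => c⁻¹ * f y) = fun y => f y / c := by
    funext y
    rw [div_eq_inv_mul]
  rwa [this] at h

lemma rowIn_aff : ∀ q : PT kk bb, ∃ a c : ℝ, ∀ v : Fin 1 → ℝ, rowIn kk bb v q = a * v 0 + c := by
  intro q
  by_cases h : q.1 = 0 ∧ (q.2 : ℕ) = 0
  · exact ⟨1, 0, fun v => by rw [rowIn, if_pos h]; ring⟩
  · exact ⟨0, 0, fun v => by rw [rowIn, if_neg h]; ring⟩

lemma rowClamp_aff : ∀ q : PT kk bb, AffP (fun y => rowClamp kk bb y q) := by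
  intro q
  unfold rowClamp
  split_ifs
  · exact affp_coord _
  · exact affp_sub (affp_coord _) (affp_const _)
  · exact affp_const 0

lemma xrd_aff : AffP (xrd kk bb) := affp_sub (affp_coord _) (affp_coord _)

lemma rowBranch_aff : ∀ q : PT kk bb, AffP (fun y => rowBranch kk bb y q) := by
  intro q
  unfold rowBranch
  split_ifs
  · exact affp_divc _ (affp_sub (xrd_aff kk bb) (affp_const _))
  · exact affp_divc _ (affp_sub (xrd_aff kk bb) (affp_const _))
  · exact xrd_aff kk bb
  · exact affp_const 0

lemma rowMultPre_aff : ∀ q : PT kk bb, AffP (fun y => rowMultPre kk bb y q) := by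
  intro q
  unfold rowMultPre
  split_ifs
  · exact affp_divc _ (affp_add (affp_sub (affp_coord _) (affp_coord _)) (affp_coord _))
  · exact affp_divc _ (affp_sub (affp_sub (affp_coord _) (affp_coord _)) (affp_coord _))
  · exact affp_divc _ (affp_sub (affp_coord _) (affp_sub (affp_coord _) (affp_coord _)))
  · exact affp_coord _
  · exact affp_coord _
  · exact affp_const 0

lemma rowTentInit_aff : ∀ q : PT kk bb, AffP (fun y => rowTentInit kk bb y q) := by
  intro q
  unfold rowTentInit
  split_ifs
  · exact affp_sub (affp_coord _) (affp_const _)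
  · exact affp_add (affp_const _) (affp_coord _)
  · exact affp_sub (affp_add (affp_coord _) (affp_coord _)) (affp_const _)
  · exact affp_add (affp_const _) (affp_add (affp_coord _) (affp_coord _))
  · exact affp_coord _
  · exact affp_coord _

lemma rowTent_aff (c : ℝ) : ∀ q : PT kk bb, AffP (fun y => rowTent kk bb c y q) := by
  intro q
  unfold rowTent
  split_ifs
  · exact affp_sub (affp_sum _ _ (fun i _ => affp_cmul _ (affp_coord _))) (affp_const _)
  · exact affp_sub (affp_coord _) (affp_cmul _ (affp_sum _ _ (fun i _ => affp_cmul _ (affp_coord _))))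
  · exact affp_sub (affp_sum _ _ (fun i _ => affp_cmul _ (affp_coord _))) (affp_const _)
  · exact affp_sub (affp_coord _) (affp_cmul _ (affp_sum _ _ (fun i _ => affp_cmul _ (affp_coord _))))
  · exact affp_coord _
  · exact affp_coord _

lemma rowMultPost_aff : ∀ q : PT kk bb, AffP (fun y => rowMultPost kk bb y q) := by
  intro q
  unfold rowMultPost
  split_ifs
  · exact affp_sub (affp_coord _) (affp_coord _)
  · exact affp_sub (affp_sub (affp_coord _) (affp_coord _)) (affp_const _)
  · exact affp_coord _
  · exact affp_coord _
  · exact affp_const 0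

lemma rowRamp_aff : ∀ q : PT kk bb, AffP (fun y => rowRamp kk bb y q) := by
  intro q
  unfold rowRamp
  split_ifs
  · exact affp_sub (affp_coord _) (affp_coord _)
  · exact affp_sub (affp_coord _) (affp_const _)
  · exact affp_const 0

lemma outG_aff (C0 C1 : ℝ) : AffP (outG kk bb C0 C1) := by
  unfold outG
  exact affp_sub (affp_sub
    (affp_sum _ _ (fun l _ => affp_cmul _ (affp_sub (affp_coord _) (affp_coord _))))
    (affp_const _)) (affp_cmul _ (affp_coord _))

end NetConstruction



-- ################ forward semantics ################

section Forward

variable (kk bb mm : ℕ)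

def stepV (row : (PT kk bb → ℝ) → PT kk bb → ℝ) (y : PT kk bb → ℝ) : PT kk bb → ℝ :=
  fun p => relu (row y p)

def tentFoldV : ℕ → (PT kk bb → ℝ) → (PT kk bb → ℝ)
  | 0, y => y
  | (n+1), y => stepV kk bb (rowTent kk bb ((((bb:ℝ)^2)⁻¹) ^ n)) (tentFoldV n y)

def InvQ (j : ℕ) (xv : ℝ) (y : PT kk bb → ℝ) : Prop :=
  ∀ l : Fin (kk+1),
    y (l, ⟨0, by omega⟩) - y (l, ⟨1, by omega⟩) = Qf bb mm j (svf kk l.1 xv) ∧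
    y (l, ⟨2*bb+2, by omega⟩) = svf kk l.1 xv ∧
    y (l, ⟨2*bb+3, by omega⟩) = xv

def InvT (pf df w1f w2f : Fin (kk+1) → ℝ) (xv : ℝ) (y : PT kk bb → ℝ) : Prop :=
  ∀ l : Fin (kk+1),
    (∀ i : ℕ, (h : i < bb) → y (l, ⟨i, by omega⟩) = relu (pf l - (i:ℝ)/bb)) ∧
    y (l, ⟨bb, by omega⟩) = w1f l ∧
    (∀ i : ℕ, (h : i < bb) → y (l, ⟨bb+1+i, by omega⟩) = relu (df l - (i:ℝ)/bb)) ∧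
    y (l, ⟨2*bb+1, by omega⟩) = w2f l ∧
    y (l, ⟨2*bb+2, by omega⟩) = svf kk l.1 xv ∧
    y (l, ⟨2*bb+3, by omega⟩) = xv

lemma svf_nonneg (k l : ℕ) (x : ℝ) : 0 ≤ svf k l x :=
  div_nonneg (relu_nonneg _) (by positivity)

variable {kk bb mm}

lemma tent_step_fwd (hbb : 1 ≤ bb) {u1 u2 w1 w2 : Fin (kk+1) → ℝ} {xv : ℝ} {c : ℝ}
    (hxv : 0 ≤ xv)
    (hw1 : ∀ l, 0 ≤ w1 l - c * elf bb (u1 l))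
    (hw2 : ∀ l, 0 ≤ w2 l - c * elf bb (u2 l))
    {y : PT kk bb → ℝ} (hI : InvT kk bb u1 u2 w1 w2 xv y) :
    InvT kk bb (fun l => gf bb (u1 l)) (fun l => gf bb (u2 l))
      (fun l => w1 l - c * elf bb (u1 l)) (fun l => w2 l - c * elf bb (u2 l)) xv
      (stepV kk bb (rowTent kk bb c) y) := by
  intro l
  obtain ⟨hA, hB, hC, hD, hE, hF⟩ := hI l
  have hU1 : (∑ i : Fin bb, gcoef bb i * y (l, ⟨i.1, by omega⟩)) = gf bb (u1 l) := by
    rw [gf, ← Fin.sum_univ_eq_sum_range (fun i => gcoef bb i * relu (u1 l - (i:ℝ)/bb)) bb]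
    exact Finset.sum_congr rfl fun i _ => by rw [hA i.1 i.2]
  have hE1 : (∑ i : Fin bb, ecoef bb i * y (l, ⟨i.1, by omega⟩)) = elf bb (u1 l) := by
    rw [elf, ← Fin.sum_univ_eq_sum_range (fun i => ecoef bb i * relu (u1 l - (i:ℝ)/bb)) bb]
    exact Finset.sum_congr rfl fun i _ => by rw [hA i.1 i.2]
  have hU2 : (∑ i : Fin bb, gcoef bb i * y (l, ⟨bb+1+i.1, by omega⟩)) = gf bb (u2 l) := by
    rw [gf, ← Fin.sum_univ_eq_sum_range (fun i => gcoef bb i * relu (u2 l - (i:ℝ)/bb)) bb]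
    exact Finset.sum_congr rfl fun i _ => by rw [hC i.1 i.2]
  have hE2 : (∑ i : Fin bb, ecoef bb i * y (l, ⟨bb+1+i.1, by omega⟩)) = elf bb (u2 l) := by
    rw [elf, ← Fin.sum_univ_eq_sum_range (fun i => ecoef bb i * relu (u2 l - (i:ℝ)/bb)) bb]
    exact Finset.sum_congr rfl fun i _ => by rw [hC i.1 i.2]
  refine ⟨?_, ?_, ?_, ?_, ?_, ?_⟩
  · intro i h
    show relu (rowTent kk bb c y (l, ⟨i, by omega⟩)) = _
    rw [rowTent]
    rw [if_pos (show ((⟨i, by omega⟩ : Fin (2*bb+4)) : ℕ) < bb from h)]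
    rw [hU1]
  · show relu (rowTent kk bb c y (l, ⟨bb, by omega⟩)) = _
    rw [rowTent]
    rw [if_neg (show ¬ ((⟨bb, by omega⟩ : Fin (2*bb+4)) : ℕ) < bb by simp only [Fin.val_mk]; omega),
      if_pos (show ((⟨bb, by omega⟩ : Fin (2*bb+4)) : ℕ) = bb from rfl)]
    rw [hE1, hB, relu_of_nonneg (hw1 l)]
  · intro i h
    show relu (rowTent kk bb c y (l, ⟨bb+1+i, by omega⟩)) = _
    rw [rowTent]
    rw [if_neg (show ¬ ((⟨bb+1+i, by omega⟩ : Fin (2*bb+4)) : ℕ) < bb by simp only [Fin.val_mk]; omega),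
      if_neg (show ¬ ((⟨bb+1+i, by omega⟩ : Fin (2*bb+4)) : ℕ) = bb by simp only [Fin.val_mk]; omega),
      if_pos (show ((⟨bb+1+i, by omega⟩ : Fin (2*bb+4)) : ℕ) < 2*bb+1 by simp only [Fin.val_mk]; omega)]
    rw [hU2]
    have : ((bb+1+i - (bb+1) : ℕ) : ℝ) = (i:ℝ) := by
      congr 1
      omega
    rw [this]
  · show relu (rowTent kk bb c y (l, ⟨2*bb+1, by omega⟩)) = _
    rw [rowTent]
    rw [if_neg (show ¬ ((⟨2*bb+1, by omega⟩ : Fin (2*bb+4)) : ℕ) < bb by simp only [Fin.val_mk]; omega),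
      if_neg (show ¬ ((⟨2*bb+1, by omega⟩ : Fin (2*bb+4)) : ℕ) = bb by simp only [Fin.val_mk]; omega),
      if_neg (show ¬ ((⟨2*bb+1, by omega⟩ : Fin (2*bb+4)) : ℕ) < 2*bb+1 by simp only [Fin.val_mk]; omega),
      if_pos (show ((⟨2*bb+1, by omega⟩ : Fin (2*bb+4)) : ℕ) = 2*bb+1 from rfl)]
    rw [hE2, hD, relu_of_nonneg (hw2 l)]
  · show relu (rowTent kk bb c y (l, ⟨2*bb+2, by omega⟩)) = _
    rw [rowTent]
    rw [if_neg (show ¬ ((⟨2*bb+2, by omega⟩ : Fin (2*bb+4)) : ℕ) < bb by simp only [Fin.val_mk]; omega),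
      if_neg (show ¬ ((⟨2*bb+2, by omega⟩ : Fin (2*bb+4)) : ℕ) = bb by simp only [Fin.val_mk]; omega),
      if_neg (show ¬ ((⟨2*bb+2, by omega⟩ : Fin (2*bb+4)) : ℕ) < 2*bb+1 by simp only [Fin.val_mk]; omega),
      if_neg (show ¬ ((⟨2*bb+2, by omega⟩ : Fin (2*bb+4)) : ℕ) = 2*bb+1 by simp only [Fin.val_mk]; omega),
      if_pos (show ((⟨2*bb+2, by omega⟩ : Fin (2*bb+4)) : ℕ) = 2*bb+2 from rfl)]
    rw [hE, relu_of_nonneg (svf_nonneg _ _ _)]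
  · show relu (rowTent kk bb c y (l, ⟨2*bb+3, by omega⟩)) = _
    rw [rowTent]
    rw [if_neg (show ¬ ((⟨2*bb+3, by omega⟩ : Fin (2*bb+4)) : ℕ) < bb by simp only [Fin.val_mk]; omega),
      if_neg (show ¬ ((⟨2*bb+3, by omega⟩ : Fin (2*bb+4)) : ℕ) = bb by simp only [Fin.val_mk]; omega),
      if_neg (show ¬ ((⟨2*bb+3, by omega⟩ : Fin (2*bb+4)) : ℕ) < 2*bb+1 by simp only [Fin.val_mk]; omega),
      if_neg (show ¬ ((⟨2*bb+3, by omega⟩ : Fin (2*bb+4)) : ℕ) = 2*bb+1 by simp only [Fin.val_mk]; omega),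
      if_neg (show ¬ ((⟨2*bb+3, by omega⟩ : Fin (2*bb+4)) : ℕ) = 2*bb+2 by simp only [Fin.val_mk]; omega)]
    rw [hF, relu_of_nonneg hxv]

end Forward



section Forward2

variable {kk bb mm : ℕ}

lemma Sqp_zero (b : ℕ) (t : ℝ) : Sqp b 0 t = t := by
  simp [Sqp]

lemma Sqp_succ_right (b n : ℕ) (t : ℝ) :
    Sqp b (n+1) t = Sqp b n t - (((b:ℝ)^2)⁻¹)^n * elf b ((gf b)^[n] t) := by
  rw [Sqp, Sqp, Finset.sum_range_succ]
  ring

lemma gf_iter_mem {b : ℕ} (hb : 1 ≤ b) {t : ℝ} (h0 : 0 ≤ t) (h1 : t ≤ 1) (n : ℕ) :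
    0 ≤ (gf b)^[n] t ∧ (gf b)^[n] t ≤ 1 := by
  induction n with
  | zero => exact ⟨h0, h1⟩
  | succ n ih =>
    rw [Function.iterate_succ_apply']
    exact (gf_mem_and_key hb ih.1 ih.2).1

lemma InvT_ext {p1 p2 d1 d2 w1 w1' w2 w2' : Fin (kk+1) → ℝ} {xv : ℝ} {y : PT kk bb → ℝ}
    (hp : p1 = p2) (hd : d1 = d2) (h1 : w1 = w1') (h2 : w2 = w2')
    (h : InvT kk bb p1 d1 w1 w2 xv y) : InvT kk bb p2 d2 w1' w2' xv y := by
  subst hp hd h1 h2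
  exact h

lemma tentFold_fwd (hbb : 1 ≤ bb) {xv : ℝ} (hxv : 0 ≤ xv) {pf df : Fin (kk+1) → ℝ}
    (hp : ∀ l, 0 ≤ pf l ∧ pf l ≤ 1) (hd : ∀ l, 0 ≤ df l ∧ df l ≤ 1)
    {y : PT kk bb → ℝ}
    (hI : InvT kk bb pf df (fun l => 1 + Sqp bb 0 (pf l)) (fun l => 1 + Sqp bb 0 (df l)) xv y) :
    ∀ n : ℕ, InvT kk bb (fun l => (gf bb)^[n] (pf l)) (fun l => (gf bb)^[n] (df l))
      (fun l => 1 + Sqp bb n (pf l)) (fun l => 1 + Sqp bb n (df l)) xv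
      (tentFoldV kk bb n y) := by
  intro n
  induction n with
  | zero =>
    refine InvT_ext ?_ ?_ rfl rfl hI <;> funext l <;> simp
  | succ n ih =>
    have hw : ∀ (tf : Fin (kk+1) → ℝ) (htf : ∀ l, 0 ≤ tf l ∧ tf l ≤ 1) (l : Fin (kk+1)),
        0 ≤ (1 + Sqp bb n (tf l)) - (((bb:ℝ)^2)⁻¹)^n * elf bb ((gf bb)^[n] (tf l)) := by
      intro tf htf l
      have heq := Sqp_succ_right bb n (tf l)
      have := (sqp_bounds hbb (n+1) (htf l).1 (htf l).2).1
      linarith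
    have hstep := tent_step_fwd (c := (((bb:ℝ)^2)⁻¹)^n) hbb hxv
      (hw pf hp) (hw df hd) ih
    refine InvT_ext ?_ ?_ ?_ ?_ hstep
    · funext l
      rw [Function.iterate_succ_apply']
    · funext l
      rw [Function.iterate_succ_apply']
    · funext l
      rw [Sqp_succ_right]
      ring
    · funext l
      rw [Sqp_succ_right]
      ring

lemma G_fwd (hbb : 4 ≤ bb) {j : ℕ} {xv : ℝ} (hxv : 0 ≤ xv)
    (hsv : ∀ l : Fin (kk+1), svf kk l.1 xv ≤ 1)
    {y : PT kk bb → ℝ} (hI : InvQ kk bb mm j xv y) :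
    InvQ kk bb mm (j+1) xv
      (stepV kk bb (rowMultPost kk bb)
        (tentFoldV kk bb mm (stepV kk bb (rowTentInit kk bb) (stepV kk bb (rowMultPre kk bb) y)))) := by
  have hbb1 : 1 ≤ bb := by omega
  set s : Fin (kk+1) → ℝ := fun l => svf kk l.1 xv with hs
  set q : Fin (kk+1) → ℝ := fun l => Qf bb mm j (s l) with hq
  have hsm : ∀ l, 0 ≤ s l ∧ s l ≤ 1 := fun l => ⟨svf_nonneg _ _ _, hsv l⟩
  have hqm : ∀ l, 0 ≤ q l ∧ q l ≤ 1 := fun l =>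
    (Qf_mem_err hbb1 mm (hsm l).1 (hsm l).2 j).1
  set pf : Fin (kk+1) → ℝ := fun l => (q l + s l)/2 with hpf
  set df : Fin (kk+1) → ℝ := fun l => relu ((q l - s l)/2) + relu ((s l - q l)/2) with hdf
  have hpm : ∀ l, 0 ≤ pf l ∧ pf l ≤ 1 := by
    intro l
    have hpl : pf l = (q l + s l)/2 := rfl
    constructor
    · have := (hqm l).1; have := (hsm l).1; rw [hpl]; linarith
    · have := (hqm l).2; have := (hsm l).2; rw [hpl]; linarith
  have hdm : ∀ l, 0 ≤ df l ∧ df l ≤ 1 := by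
    intro l
    have habs : df l = |(q l - s l)/2| := by
      rw [hdf]
      dsimp only
      rw [← relu_abs ((q l - s l)/2)]
      congr 2
      ring
    constructor
    · rw [habs]; exact abs_nonneg _
    · rw [habs, abs_le]
      have h1 := (hqm l).1; have h2 := (hqm l).2; have h3 := (hsm l).1; have h4 := (hsm l).2
      constructor <;> linarith
  -- step 1 : multPre
  set z1 : PT kk bb → ℝ := stepV kk bb (rowMultPre kk bb) y with hz1
  have hz1e : ∀ l : Fin (kk+1),
      z1 (l, ⟨0, by omega⟩) = pf l ∧
      z1 (l, ⟨1, by omega⟩) = relu ((q l - s l)/2) ∧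
      z1 (l, ⟨2, by omega⟩) = relu ((s l - q l)/2) ∧
      z1 (l, ⟨2*bb+2, by omega⟩) = s l ∧
      z1 (l, ⟨2*bb+3, by omega⟩) = xv := by
    intro l
    obtain ⟨hd0, hs0, hx0⟩ := hI l
    refine ⟨?_, ?_, ?_, ?_, ?_⟩
    · show relu (rowMultPre kk bb y (l, ⟨0, by omega⟩)) = _
      rw [rowMultPre, if_pos (show ((⟨0, by omega⟩ : Fin (2*bb+4)) : ℕ) = 0 from rfl)]
      rw [hd0, hs0, relu_of_nonneg (by have := (hqm l).1; have := (hsm l).1; linarith)]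
    · show relu (rowMultPre kk bb y (l, ⟨1, by omega⟩)) = _
      rw [rowMultPre,
        if_neg (show ¬ ((⟨1, by omega⟩ : Fin (2*bb+4)) : ℕ) = 0 by simp only [Fin.val_mk]; omega),
        if_pos (show ((⟨1, by omega⟩ : Fin (2*bb+4)) : ℕ) = 1 from rfl)]
      rw [hd0, hs0]
    · show relu (rowMultPre kk bb y (l, ⟨2, by omega⟩)) = _
      rw [rowMultPre,
        if_neg (show ¬ ((⟨2, by omega⟩ : Fin (2*bb+4)) : ℕ) = 0 by simp only [Fin.val_mk]; omega),
        if_neg (show ¬ ((⟨2, by omega⟩ : Fin (2*bb+4)) : ℕ) = 1 by simp only [Fin.val_mk]; omega),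
        if_pos (show ((⟨2, by omega⟩ : Fin (2*bb+4)) : ℕ) = 2 from rfl)]
      rw [hd0, hs0]
    · show relu (rowMultPre kk bb y (l, ⟨2*bb+2, by omega⟩)) = _
      rw [rowMultPre,
        if_neg (show ¬ ((⟨2*bb+2, by omega⟩ : Fin (2*bb+4)) : ℕ) = 0 by simp only [Fin.val_mk]; omega),
        if_neg (show ¬ ((⟨2*bb+2, by omega⟩ : Fin (2*bb+4)) : ℕ) = 1 by simp only [Fin.val_mk]; omega),
        if_neg (show ¬ ((⟨2*bb+2, by omega⟩ : Fin (2*bb+4)) : ℕ) = 2 by simp only [Fin.val_mk]; omega),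
        if_pos (show ((⟨2*bb+2, by omega⟩ : Fin (2*bb+4)) : ℕ) = 2*bb+2 from rfl)]
      rw [hs0, relu_of_nonneg (hsm l).1]
    · show relu (rowMultPre kk bb y (l, ⟨2*bb+3, by omega⟩)) = _
      rw [rowMultPre,
        if_neg (show ¬ ((⟨2*bb+3, by omega⟩ : Fin (2*bb+4)) : ℕ) = 0 by simp only [Fin.val_mk]; omega),
        if_neg (show ¬ ((⟨2*bb+3, by omega⟩ : Fin (2*bb+4)) : ℕ) = 1 by simp only [Fin.val_mk]; omega),
        if_neg (show ¬ ((⟨2*bb+3, by omega⟩ : Fin (2*bb+4)) : ℕ) = 2 by simp only [Fin.val_mk]; omega),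
        if_neg (show ¬ ((⟨2*bb+3, by omega⟩ : Fin (2*bb+4)) : ℕ) = 2*bb+2 by simp only [Fin.val_mk]; omega),
        if_pos (show ((⟨2*bb+3, by omega⟩ : Fin (2*bb+4)) : ℕ) = 2*bb+3 from rfl)]
      rw [hx0, relu_of_nonneg hxv]
  -- step 2 : tentInit
  set z2 : PT kk bb → ℝ := stepV kk bb (rowTentInit kk bb) z1 with hz2
  have hI2 : InvT kk bb pf df (fun l => 1 + Sqp bb 0 (pf l)) (fun l => 1 + Sqp bb 0 (df l)) xv z2 := by
    refine InvT_ext (p1 := pf) (d1 := df) (w1 := fun l => 1 + pf l)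
      (w2 := fun l => 1 + df l) rfl rfl ?_ ?_ ?_
    · funext l; rw [Sqp_zero]
    · funext l; rw [Sqp_zero]
    intro l
    obtain ⟨he0, he1, he2, hes, hex⟩ := hz1e l
    refine ⟨?_, ?_, ?_, ?_, ?_, ?_⟩
    · intro i h
      show relu (rowTentInit kk bb z1 (l, ⟨i, by omega⟩)) = _
      rw [rowTentInit, if_pos (show ((⟨i, by omega⟩ : Fin (2*bb+4)) : ℕ) < bb from h), he0]
    · show relu (rowTentInit kk bb z1 (l, ⟨bb, by omega⟩)) = _
      rw [rowTentInit,
        if_neg (show ¬ ((⟨bb, by omega⟩ : Fin (2*bb+4)) : ℕ) < bb by simp only [Fin.val_mk]; omega),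
        if_pos (show ((⟨bb, by omega⟩ : Fin (2*bb+4)) : ℕ) = bb from rfl), he0,
        relu_of_nonneg (by have := (hpm l).1; linarith)]
    · intro i h
      show relu (rowTentInit kk bb z1 (l, ⟨bb+1+i, by omega⟩)) = _
      rw [rowTentInit,
        if_neg (show ¬ ((⟨bb+1+i, by omega⟩ : Fin (2*bb+4)) : ℕ) < bb by simp only [Fin.val_mk]; omega),
        if_neg (show ¬ ((⟨bb+1+i, by omega⟩ : Fin (2*bb+4)) : ℕ) = bb by simp only [Fin.val_mk]; omega),
        if_pos (show ((⟨bb+1+i, by omega⟩ : Fin (2*bb+4)) : ℕ) < 2*bb+1 by simp only [Fin.val_mk]; omega),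
        he1, he2]
      have hc : ((bb+1+i - (bb+1) : ℕ) : ℝ) = (i:ℝ) := by
        congr 1
        omega
      rw [hc, hdf]
    · show relu (rowTentInit kk bb z1 (l, ⟨2*bb+1, by omega⟩)) = _
      rw [rowTentInit,
        if_neg (show ¬ ((⟨2*bb+1, by omega⟩ : Fin (2*bb+4)) : ℕ) < bb by simp only [Fin.val_mk]; omega),
        if_neg (show ¬ ((⟨2*bb+1, by omega⟩ : Fin (2*bb+4)) : ℕ) = bb by simp only [Fin.val_mk]; omega),
        if_neg (show ¬ ((⟨2*bb+1, by omega⟩ : Fin (2*bb+4)) : ℕ) < 2*bb+1 by simp only [Fin.val_mk]; omega),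
        if_pos (show ((⟨2*bb+1, by omega⟩ : Fin (2*bb+4)) : ℕ) = 2*bb+1 from rfl),
        he1, he2]
      rw [relu_of_nonneg (by have := (hdm l).1; rw [hdf] at this; dsimp only at this; linarith)]
    · show relu (rowTentInit kk bb z1 (l, ⟨2*bb+2, by omega⟩)) = _
      rw [rowTentInit,
        if_neg (show ¬ ((⟨2*bb+2, by omega⟩ : Fin (2*bb+4)) : ℕ) < bb by simp only [Fin.val_mk]; omega),
        if_neg (show ¬ ((⟨2*bb+2, by omega⟩ : Fin (2*bb+4)) : ℕ) = bb by simp only [Fin.val_mk]; omega),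
        if_neg (show ¬ ((⟨2*bb+2, by omega⟩ : Fin (2*bb+4)) : ℕ) < 2*bb+1 by simp only [Fin.val_mk]; omega),
        if_neg (show ¬ ((⟨2*bb+2, by omega⟩ : Fin (2*bb+4)) : ℕ) = 2*bb+1 by simp only [Fin.val_mk]; omega),
        if_pos (show ((⟨2*bb+2, by omega⟩ : Fin (2*bb+4)) : ℕ) = 2*bb+2 from rfl), hes,
        relu_of_nonneg (hsm l).1]
    · show relu (rowTentInit kk bb z1 (l, ⟨2*bb+3, by omega⟩)) = _
      rw [rowTentInit,
        if_neg (show ¬ ((⟨2*bb+3, by omega⟩ : Fin (2*bb+4)) : ℕ) < bb by simp only [Fin.val_mk]; omega),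
        if_neg (show ¬ ((⟨2*bb+3, by omega⟩ : Fin (2*bb+4)) : ℕ) = bb by simp only [Fin.val_mk]; omega),
        if_neg (show ¬ ((⟨2*bb+3, by omega⟩ : Fin (2*bb+4)) : ℕ) < 2*bb+1 by simp only [Fin.val_mk]; omega),
        if_neg (show ¬ ((⟨2*bb+3, by omega⟩ : Fin (2*bb+4)) : ℕ) = 2*bb+1 by simp only [Fin.val_mk]; omega),
        if_neg (show ¬ ((⟨2*bb+3, by omega⟩ : Fin (2*bb+4)) : ℕ) = 2*bb+2 by simp only [Fin.val_mk]; omega),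
        hex, relu_of_nonneg hxv]
  -- step 3 : tent layers
  have hI3 := tentFold_fwd hbb1 hxv hpm hdm hI2 mm
  -- step 4 : multPost
  intro l
  obtain ⟨hu1, hw1, hu2, hw2, hsx, hxx⟩ := hI3 l
  set z3 : PT kk bb → ℝ := tentFoldV kk bb mm z2 with hz3
  have hav : z3 (l, ⟨bb, by omega⟩) - z3 (l, ⟨2*bb+1, by omega⟩) = mulA bb mm (q l) (s l) := by
    rw [hw1, hw2, mulA]
    have h1 : (q l + s l)/2 = pf l := rfl
    have h2 : relu ((q l - s l)/2) + relu ((s l - q l)/2) = df l := rfl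
    rw [h1, h2]
    ring
  refine ⟨?_, ?_, ?_⟩
  · show relu (rowMultPost kk bb z3 (l, ⟨0, by omega⟩)) - relu (rowMultPost kk bb z3 (l, ⟨1, by omega⟩)) = _
    rw [rowMultPost, rowMultPost,
      if_pos (show ((⟨0, by omega⟩ : Fin (2*bb+4)) : ℕ) = 0 from rfl),
      if_neg (show ¬ ((⟨1, by omega⟩ : Fin (2*bb+4)) : ℕ) = 0 by simp only [Fin.val_mk]; omega),
      if_pos (show ((⟨1, by omega⟩ : Fin (2*bb+4)) : ℕ) = 1 from rfl), hav]
    rfl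
  · show relu (rowMultPost kk bb z3 (l, ⟨2*bb+2, by omega⟩)) = _
    rw [rowMultPost,
      if_neg (show ¬ ((⟨2*bb+2, by omega⟩ : Fin (2*bb+4)) : ℕ) = 0 by simp only [Fin.val_mk]; omega),
      if_neg (show ¬ ((⟨2*bb+2, by omega⟩ : Fin (2*bb+4)) : ℕ) = 1 by simp only [Fin.val_mk]; omega),
      if_pos (show ((⟨2*bb+2, by omega⟩ : Fin (2*bb+4)) : ℕ) = 2*bb+2 from rfl), hsx,
      relu_of_nonneg (hsm l).1]
  · show relu (rowMultPost kk bb z3 (l, ⟨2*bb+3, by omega⟩)) = _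
    rw [rowMultPost,
      if_neg (show ¬ ((⟨2*bb+3, by omega⟩ : Fin (2*bb+4)) : ℕ) = 0 by simp only [Fin.val_mk]; omega),
      if_neg (show ¬ ((⟨2*bb+3, by omega⟩ : Fin (2*bb+4)) : ℕ) = 1 by simp only [Fin.val_mk]; omega),
      if_neg (show ¬ ((⟨2*bb+3, by omega⟩ : Fin (2*bb+4)) : ℕ) = 2*bb+2 by simp only [Fin.val_mk]; omega),
      if_pos (show ((⟨2*bb+3, by omega⟩ : Fin (2*bb+4)) : ℕ) = 2*bb+3 from rfl), hxx,
      relu_of_nonneg hxv]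

end Forward2



section Forward3

variable {kk bb mm : ℕ}

lemma relu_div_pos {c : ℝ} (hc : 0 < c) (a : ℝ) : relu (a / c) = relu a / c := by
  rcases le_total a 0 with h | h
  · have h2 : a / c ≤ 0 := div_nonpos_of_nonpos_of_nonneg h hc.le
    rw [relu_of_nonpos h, relu_of_nonpos h2, zero_div]
  · rw [relu_of_nonneg h, relu_of_nonneg (by positivity)]

lemma front_fwd (hbb : 4 ≤ bb) (v : Fin 1 → ℝ) :
    InvQ kk bb mm 0 (clampK kk (v 0))
      (stepV kk bb (rowBranch kk bb)
        (stepV kk bb (rowClamp kk bb) (fun p => relu (rowIn kk bb v p)))) := by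
  set y1 : PT kk bb → ℝ := fun p => relu (rowIn kk bb v p) with hy1
  have h10 : y1 (0, ⟨0, by omega⟩) = relu (v 0) := by
    rw [hy1]
    dsimp only
    rw [rowIn, if_pos (⟨rfl, rfl⟩ : (0 : Fin (kk+1)) = 0 ∧ ((⟨0, by omega⟩ : Fin (2*bb+4)) : ℕ) = 0)]
  set y2 : PT kk bb → ℝ := stepV kk bb (rowClamp kk bb) y1 with hy2
  have h20 : y2 (0, ⟨0, by omega⟩) = relu (v 0) := by
    show relu (rowClamp kk bb y1 (0, ⟨0, by omega⟩)) = _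
    rw [rowClamp, if_pos (⟨rfl, rfl⟩ : (0 : Fin (kk+1)) = 0 ∧ ((⟨0, by omega⟩ : Fin (2*bb+4)) : ℕ) = 0),
      h10, relu_of_nonneg (relu_nonneg _)]
  have h21 : y2 (0, ⟨1, by omega⟩) = relu (relu (v 0) - ((kk:ℝ)+1)) := by
    show relu (rowClamp kk bb y1 (0, ⟨1, by omega⟩)) = _
    rw [rowClamp,
      if_neg (show ¬ ((0 : Fin (kk+1)) = 0 ∧ ((⟨1, by omega⟩ : Fin (2*bb+4)) : ℕ) = 0) by
        simp only [Fin.val_mk]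
        omega),
      if_pos (⟨rfl, rfl⟩ : (0 : Fin (kk+1)) = 0 ∧ ((⟨1, by omega⟩ : Fin (2*bb+4)) : ℕ) = 1), h10]
  have hxrd : xrd kk bb y2 = clampK kk (v 0) := by
    rw [xrd, h20, h21, clampK]
  set xv : ℝ := clampK kk (v 0) with hxv
  have hxv0 : 0 ≤ xv := (clampK_mem kk (v 0)).1
  intro l
  have hsl : relu ((xv - ((l.1:ℕ):ℝ))/((kk:ℝ)+1)) = svf kk l.1 xv := by
    rw [relu_div_pos (by positivity), svf]
  refine ⟨?_, ?_, ?_⟩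
  · show relu (rowBranch kk bb y2 (l, ⟨0, by omega⟩)) - relu (rowBranch kk bb y2 (l, ⟨1, by omega⟩)) = _
    rw [rowBranch, rowBranch,
      if_pos (show ((⟨0, by omega⟩ : Fin (2*bb+4)) : ℕ) = 0 from rfl),
      if_neg (show ¬ ((⟨1, by omega⟩ : Fin (2*bb+4)) : ℕ) = 0 by simp only [Fin.val_mk]; omega),
      if_neg (show ¬ ((⟨1, by omega⟩ : Fin (2*bb+4)) : ℕ) = 2*bb+2 by simp only [Fin.val_mk]; omega),
      if_neg (show ¬ ((⟨1, by omega⟩ : Fin (2*bb+4)) : ℕ) = 2*bb+3 by simp only [Fin.val_mk]; omega),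
      hxrd, hsl]
    rw [relu_of_nonpos (le_refl (0:ℝ)), sub_zero]
    rfl
  · show relu (rowBranch kk bb y2 (l, ⟨2*bb+2, by omega⟩)) = _
    rw [rowBranch,
      if_neg (show ¬ ((⟨2*bb+2, by omega⟩ : Fin (2*bb+4)) : ℕ) = 0 by simp only [Fin.val_mk]; omega),
      if_pos (show ((⟨2*bb+2, by omega⟩ : Fin (2*bb+4)) : ℕ) = 2*bb+2 from rfl),
      hxrd, hsl]
  · show relu (rowBranch kk bb y2 (l, ⟨2*bb+3, by omega⟩)) = _
    rw [rowBranch,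
      if_neg (show ¬ ((⟨2*bb+3, by omega⟩ : Fin (2*bb+4)) : ℕ) = 0 by simp only [Fin.val_mk]; omega),
      if_neg (show ¬ ((⟨2*bb+3, by omega⟩ : Fin (2*bb+4)) : ℕ) = 2*bb+2 by simp only [Fin.val_mk]; omega),
      if_pos (show ((⟨2*bb+3, by omega⟩ : Fin (2*bb+4)) : ℕ) = 2*bb+3 from rfl),
      hxrd, relu_of_nonneg hxv0]

lemma out_eval (hbb : 4 ≤ bb) (hb1 : 1 ≤ bb) {j : ℕ} {xv : ℝ} (hxv : 0 ≤ xv)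
    (hsv : ∀ l : Fin (kk+1), svf kk l.1 xv ≤ 1) {y : PT kk bb → ℝ}
    (hI : InvQ kk bb mm j xv y) (C0 C1 : ℝ) :
    outG kk bb C0 C1 (stepV kk bb (rowRamp kk bb) y) =
      (∑ l ∈ Finset.range (kk+1), wco kk l * Qf bb mm j (svf kk l xv)) - C0
        - C1 * relu (xv - (kk:ℝ)) := by
  set z := stepV kk bb (rowRamp kk bb) y with hz
  have hz0 : ∀ l : Fin (kk+1), z (l, ⟨0, by omega⟩) - z (l, ⟨1, by omega⟩)
      = Qf bb mm j (svf kk l.1 xv) := by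
    intro l
    obtain ⟨hd, hsx, hxx⟩ := hI l
    have hQ0 := (Qf_mem_err hb1 mm (svf_nonneg kk l.1 xv) (hsv l) j).1.1
    show relu (rowRamp kk bb y (l, ⟨0, by omega⟩)) - relu (rowRamp kk bb y (l, ⟨1, by omega⟩)) = _
    rw [rowRamp, rowRamp,
      if_pos (show ((⟨0, by omega⟩ : Fin (2*bb+4)) : ℕ) = 0 from rfl),
      if_neg (show ¬ ((⟨1, by omega⟩ : Fin (2*bb+4)) : ℕ) = 0 by simp only [Fin.val_mk]; omega),
      if_neg (show ¬ ((⟨1, by omega⟩ : Fin (2*bb+4)) : ℕ) = 2 by simp only [Fin.val_mk]; omega),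
      hd, relu_of_nonneg hQ0, relu_of_nonpos (le_refl (0:ℝ)), sub_zero]
  have hz2 : z ((0 : Fin (kk+1)), ⟨2, by omega⟩) = relu (xv - (kk:ℝ)) := by
    obtain ⟨hd, hsx, hxx⟩ := hI 0
    show relu (rowRamp kk bb y (0, ⟨2, by omega⟩)) = _
    rw [rowRamp,
      if_neg (show ¬ ((⟨2, by omega⟩ : Fin (2*bb+4)) : ℕ) = 0 by simp only [Fin.val_mk]; omega),
      if_pos (show ((⟨2, by omega⟩ : Fin (2*bb+4)) : ℕ) = 2 from rfl), hxx]
  rw [outG]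
  rw [Finset.sum_congr rfl (fun l _ => by rw [hz0 l])]
  rw [hz2]
  congr 1
  congr 1
  exact Fin.sum_univ_eq_sum_range (fun l => wco kk l * Qf bb mm j (svf kk l xv)) (kk+1)

end Forward3



-- ################ assembled network ################

section Assemble

variable (kk bb mm : ℕ)

def tentFoldF : ℕ → (Fin ((kk+1)*(2*bb+4)) → ℝ) → (Fin ((kk+1)*(2*bb+4)) → ℝ)
  | 0, z => z
  | (n+1), z => layerF (liftT (rowTent kk bb ((((bb:ℝ)^2)⁻¹) ^ n))) (tentFoldF n z)

def GFnet (z : Fin ((kk+1)*(2*bb+4)) → ℝ) : Fin ((kk+1)*(2*bb+4)) → ℝ :=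
  layerF (liftT (rowMultPost kk bb))
    (tentFoldF kk bb mm
      (layerF (liftT (rowTentInit kk bb)) (layerF (liftT (rowMultPre kk bb)) z)))

def netF (C0 C1 : ℝ) (v : Fin 1 → ℝ) : Fin 1 → ℝ :=
  liftOut (outG kk bb C0 C1)
    (layerF (liftT (rowRamp kk bb))
      ((GFnet kk bb mm)^[kk-2]
        (layerF (liftT (rowBranch kk bb))
          (layerF (liftT (rowClamp kk bb))
            (layerF (liftIn (rowIn kk bb)) v)))))

variable {kk bb mm}

lemma pview_tentFoldF (n : ℕ) (z : Fin ((kk+1)*(2*bb+4)) → ℝ) :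
    pview (tentFoldF kk bb n z) = tentFoldV kk bb n (pview z) := by
  induction n with
  | zero => rfl
  | succ n ih =>
    show pview (layerF (liftT (rowTent kk bb ((((bb:ℝ)^2)⁻¹) ^ n))) (tentFoldF kk bb n z)) = _
    rw [pview_layerF, ih]
    rfl

lemma pview_GFnet (z : Fin ((kk+1)*(2*bb+4)) → ℝ) :
    pview (GFnet kk bb mm z) =
      stepV kk bb (rowMultPost kk bb)
        (tentFoldV kk bb mm
          (stepV kk bb (rowTentInit kk bb) (stepV kk bb (rowMultPre kk bb) (pview z)))) := by
  rw [GFnet, pview_layerF, pview_tentFoldF, pview_layerF, pview_layerF]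
  rfl

lemma netF_eval (hbb : 4 ≤ bb) (C0 C1 : ℝ) (v : Fin 1 → ℝ) (i : Fin 1)
    (hclamp : clampK kk (v 0) ≤ (kk:ℝ)+1) :
    netF kk bb mm C0 C1 v i =
      (∑ l ∈ Finset.range (kk+1), wco kk l * Qf bb mm (kk-2) (svf kk l (clampK kk (v 0))))
        - C0 - C1 * relu (clampK kk (v 0) - (kk:ℝ)) := by
  have hb1 : 1 ≤ bb := by omega
  set xv : ℝ := clampK kk (v 0) with hxv
  have hxv0 : 0 ≤ xv := (clampK_mem kk (v 0)).1
  have hsv : ∀ l : Fin (kk+1), svf kk l.1 xv ≤ 1 := by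
    intro l
    exact (svf_mem (by omega : l.1 ≤ kk) hxv0 hclamp).2
  -- invariants
  set z3 := layerF (liftT (rowBranch kk bb))
      (layerF (liftT (rowClamp kk bb)) (layerF (liftIn (rowIn kk bb)) v)) with hz3
  have hpv3 : pview z3 =
      stepV kk bb (rowBranch kk bb)
        (stepV kk bb (rowClamp kk bb) (fun p => relu (rowIn kk bb v p))) := by
    rw [hz3, pview_layerF, pview_layerF, pview_layerIn]
    rfl
  have hI0 : InvQ kk bb mm 0 xv (pview z3) := by
    rw [hpv3]
    exact front_fwd hbb v
  have hIj : ∀ j : ℕ, InvQ kk bb mm j xv (pview ((GFnet kk bb mm)^[j] z3)) := by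
    intro j
    induction j with
    | zero => exact hI0
    | succ j ih =>
      rw [Function.iterate_succ_apply', pview_GFnet]
      exact G_fwd hbb hxv0 hsv ih
  have hfin := out_eval hbb hb1 hxv0 hsv (hIj (kk-2)) C0 C1
  show outG kk bb C0 C1 (pview (layerF (liftT (rowRamp kk bb)) ((GFnet kk bb mm)^[kk-2] z3))) = _
  rw [pview_layerF]
  exact hfin

-- net-ness
lemma tentFoldF_net {NB d Lb : ℕ} {base : (Fin d → ℝ) → Fin ((kk+1)*(2*bb+4)) → ℝ}
    (hW : (kk+1)*(2*bb+4) ≤ NB)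
    (hbase : ReluNetExact d ((kk+1)*(2*bb+4)) base NB Lb) (n : ℕ) :
    ReluNetExact d ((kk+1)*(2*bb+4)) (fun x => tentFoldF kk bb n (base x)) NB (Lb + n) := by
  induction n with
  | zero => exact hbase
  | succ n ih =>
    have h := net_compose ih
      (layerF_net (bridge _ (rowTent_aff kk bb ((((bb:ℝ)^2)⁻¹) ^ n))) hW)
    exact net_congr2 (by omega) (net_congr rfl h)

lemma GFnet_net {NB d Lb : ℕ} {base : (Fin d → ℝ) → Fin ((kk+1)*(2*bb+4)) → ℝ}
    (hW : (kk+1)*(2*bb+4) ≤ NB)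
    (hbase : ReluNetExact d ((kk+1)*(2*bb+4)) base NB Lb) :
    ReluNetExact d ((kk+1)*(2*bb+4)) (fun x => GFnet kk bb mm (base x)) NB (Lb + (mm+3)) := by
  have h1 := net_compose hbase (layerF_net (bridge _ (rowMultPre_aff kk bb)) hW)
  have h2 := net_compose h1 (layerF_net (bridge _ (rowTentInit_aff kk bb)) hW)
  have h3 := tentFoldF_net hW h2 mm
  have h4 := net_compose h3 (layerF_net (bridge _ (rowMultPost_aff kk bb)) hW)
  exact net_congr2 (by omega) (net_congr rfl h4)

lemma netF_net {NB : ℕ} (hW : (kk+1)*(2*bb+4) ≤ NB) (C0 C1 : ℝ) :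
    ReluNetExact 1 1 (netF kk bb mm C0 C1) NB ((kk-2)*(mm+3) + 5) := by
  have h1 : ReluNetExact 1 ((kk+1)*(2*bb+4)) (layerF (liftIn (rowIn kk bb))) NB 2 :=
    layerF_net (bridge_in _ (rowIn_aff kk bb)) hW
  have h2 := net_compose h1 (layerF_net (bridge _ (rowClamp_aff kk bb)) hW)
  have h3 := net_compose h2 (layerF_net (bridge _ (rowBranch_aff kk bb)) hW)
  -- h3 : depth 4, computes z3
  have hiter : ∀ j : ℕ, ReluNetExact 1 ((kk+1)*(2*bb+4))
      (fun v => (GFnet kk bb mm)^[j] (layerF (liftT (rowBranch kk bb))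
        (layerF (liftT (rowClamp kk bb)) (layerF (liftIn (rowIn kk bb)) v)))) NB
      (4 + j*(mm+3)) := by
    intro j
    induction j with
    | zero =>
      refine net_congr2 (by omega) (net_congr ?_ h3)
      funext v
      rw [Function.iterate_zero_apply]
    | succ j ih =>
      have h := GFnet_net (mm := mm) hW ih
      refine net_congr2 (by ring) (net_congr ?_ h)
      funext v
      rw [Function.iterate_succ_apply']
  have h5 := net_compose (hiter (kk-2)) (layerF_net (bridge _ (rowRamp_aff kk bb)) hW)
  have h6 := net_compose h5 (ReluNetExact.affine (bridge_out _ (outG_aff kk bb C0 C1)))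
  exact net_congr2 (by omega) (net_congr rfl h6)

end Assemble



-- ################ vanishing of phiF outside the support interval ################

lemma phiF_vanish {b m k : ℕ} {x : ℝ} (hx : x ∉ Set.Icc (0:ℝ) ((k:ℝ)+1)) :
    phiF b m k x = 0 := by
  rw [Set.mem_Icc] at hx
  push_neg at hx
  rcases le_or_gt x 0 with h | h
  · have hk0 : (0:ℝ) ≤ (k:ℝ) := Nat.cast_nonneg k
    rw [phiF, clampK_of_nonpos h, relu_of_nonpos (t := (0:ℝ) - (k:ℝ)) (by linarith)]
    ring
  · have h2 : (k:ℝ)+1 < x := hx h.le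
    rw [phiF, clampK_of_ge h2.le]
    have he : (k:ℝ)+1 - (k:ℝ) = 1 := by ring
    rw [he, relu_of_nonneg (by norm_num : (0:ℝ) ≤ (1:ℝ))]
    ring


/-- approximation of the univariate B-spline `𝒩_k` by a ReLU network. -/
theorem stmt14 (N L k : ℕ) (hN : 0 < N) (hL : 0 < L) (hk : 3 ≤ k) :
    ∃ φ₁ : ℝ → ℝ,
      IsReluNet1 1 (fun v => φ₁ (v 0)) ((k + 1) * (9 * (N + 1) + k)) (7 * k ^ 2 * L) ∧
      (∀ x : ℝ, x ∉ Set.Icc (0:ℝ) ((k : ℝ) + 1) → φ₁ x = 0) ∧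
      (∀ x : ℝ, |cardBspline k x - φ₁ x| ≤
        9 * ((2 * (k : ℝ) + 2) ^ k / ((k - 1).factorial : ℝ)) *
          ((N : ℝ) + 1) ^ (-(7 * ((k : ℤ) - 1) * (L : ℤ)))) := by
  classical
  set bb : ℕ := 2*(N+1) with hbbdef
  set mm : ℕ := 4*(k-1)*L with hmmdef
  have hbb4 : 4 ≤ bb := by omega
  have hb1 : 1 ≤ bb := by omega
  refine ⟨phiF bb mm k, ?_, ?_, ?_⟩
  · -- the network
    refine ⟨(k-2)*(mm+3)+5, ?_, ?_⟩
    · -- depth bound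
      obtain ⟨a, rfl⟩ : ∃ a, k = a + 3 := ⟨k-3, by omega⟩
      obtain ⟨c, rfl⟩ : ∃ c, L = c + 1 := ⟨L-1, by omega⟩
      have h1 : a+3-2 = a+1 := by omega
      have h2 : mm = 4*(a+2)*(c+1) := by rw [hmmdef]; congr 1
      rw [h1, h2]
      nlinarith [sq_nonneg a, Nat.zero_le (a*c), Nat.zero_le a, Nat.zero_le c,
        Nat.zero_le (a*a*c), Nat.zero_le (a*a)]
    · have hW : (k+1)*(2*bb+4) ≤ (k+1)*(9*(N+1)+k) :=
        Nat.mul_le_mul_left _ (by omega)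
      have hnet := netF_net (kk := k) (bb := bb) (mm := mm) hW (psiF bb mm k 0)
        (psiF bb mm k ((k:ℝ)+1) - psiF bb mm k 0)
      refine net_congr ?_ hnet
      funext v i
      have hcl := (clampK_mem k (v 0)).2
      rw [netF_eval hbb4 _ _ v i hcl]
      rfl
  · -- vanishing outside [0, k+1]
    intro x hx
    exact phiF_vanish hx
  · -- the error bound
    intro x
    refine le_trans (phi_main hb1 hk x) ?_
    set M : ℝ := (N:ℝ)+1 with hM
    have hM1 : (1:ℝ) ≤ M := by rw [hM]; have : (0:ℝ) ≤ (N:ℝ) := Nat.cast_nonneg N; linarith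
    have hM0 : (0:ℝ) < M := by linarith
    have hbbR : ((bb:ℕ):ℝ) = 2*M := by rw [hbbdef, hM]; push_cast; ring
    set En : ℕ := 7*(k-1)*L with hEn
    have hz : ((N:ℝ)+1)^(-(7*((k:ℤ)-1)*(L:ℤ))) = (M^En)⁻¹ := by
      have he : (-(7*((k:ℤ)-1)*(L:ℤ))) = -((En:ℕ):ℤ) := by
        rw [hEn]
        push_cast [Nat.cast_sub (show 1 ≤ k by omega)]
        ring
      rw [he, zpow_neg, zpow_natCast, hM]
    rw [hz, hbbR]
    have hk3 : (3:ℝ) ≤ (k:ℝ) := by exact_mod_cast hk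
    set t : ℝ := (((2*M)^2)⁻¹)^mm with htdef
    set u : ℝ := (M^En)⁻¹ with hudef
    have ht0 : 0 ≤ t := by rw [htdef]; positivity
    have hu0 : 0 ≤ u := by rw [hudef]; positivity
    have htu : t ≤ u := by
      rw [htdef, hudef, inv_pow, ← pow_mul]
      have hle : M^En ≤ (2*M)^(2*mm) := by
        calc M^En ≤ M^(2*mm) := by
              apply pow_le_pow_right₀ hM1
              rw [hEn, hmmdef]
              have : 7*(k-1) ≤ 2*(4*(k-1)) := by omega
              calc 7*(k-1)*L ≤ 2*(4*(k-1))*L := Nat.mul_le_mul_right L this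
                _ = 2*(4*(k-1)*L) := by ring
          _ ≤ (2*M)^(2*mm) := by
              apply pow_le_pow_left₀ (by linarith) (by linarith)
      exact inv_anti₀ (by positivity) hle
    have hpow2 : (2*(k:ℝ)+2)^k = 2^k * ((k:ℝ)+1)^k := by
      have h : 2*(k:ℝ)+2 = 2*((k:ℝ)+1) := by ring
      rw [h, mul_pow]
    have hsplit : ((k:ℝ)+1)^k = ((k:ℝ)+1)^(k-1) * ((k:ℝ)+1) := by
      rw [← pow_succ]
      congr 1
      omega
    rw [hpow2, hsplit]
    have hF : (0:ℝ) < ((k-1).factorial : ℝ) := by positivity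
    set F : ℝ := ((k-1).factorial : ℝ) with hFdef
    set A : ℝ := ((k:ℝ)+1)^(k-1) with hAdef
    have hA0 : 0 ≤ A := by rw [hAdef]; positivity
    have hc0 : 0 ≤ (2:ℝ)^k / F * A := by positivity
    have hL1 : 4 * ((2:ℝ)^k / F * A * (((k:ℝ)-2) * ((1/2) * t)))
        = ((2:ℝ)^k / F * A) * (2*((k:ℝ)-2)*t) := by ring
    have hL2 : 9 * ((2:ℝ)^k * (A * ((k:ℝ)+1)) / F) * u
        = ((2:ℝ)^k / F * A) * (9*((k:ℝ)+1)*u) := by ring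
    rw [hL1, hL2]
    apply mul_le_mul_of_nonneg_left ?_ hc0
    calc 2*((k:ℝ)-2)*t ≤ 2*((k:ℝ)-2)*u := by
          apply mul_le_mul_of_nonneg_left htu (by linarith)
      _ ≤ 9*((k:ℝ)+1)*u := by
          apply mul_le_mul_of_nonneg_right (by linarith) hu0
end
end
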